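/- arXiv:2305.04803 — 3 statements merged into one kernel-verified Lean document; each statement's English description precedes it below -/
import Mathlib

section
/- Let Λ and H be countable discrete groups with H infinite, and let p : Λ ≀ H → Λ^{Ab} ≀ H be the canonical quotient homomorphism induced by the abelianization Λ → Λ^{Ab} = Λ/[Λ,Λ]. If (K, β) is a Bohr compactification of Λ^{Ab} ≀ H, then (K, β ∘ p) is a Bohr compactification of Λ ≀ H; likewise, if (K, α) is a profinite completion of Λ^{Ab} ≀ H, then (K, α ∘ p) is a profinite completion of Λ ≀ H. -/
universe u v w

/-- Conjugation by `g` as a homomorphism of a normal subgroup `N`: `n ↦ g⁻¹ n g`. -/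
def conjHom {G : Type u} [Group G] {N : Subgroup G} (hN : N.Normal) (g : G) : N →* N where
  toFun n := ⟨g⁻¹ * (n : G) * g, by simpa using hN.conj_mem (n : G) n.2 g⁻¹⟩
  map_one' := by ext; simp
  map_mul' a b := by ext; simp [mul_assoc]

/-- The conjugate representation `σ^g`, `σ^g(n) = σ(g⁻¹ n g)`. -/
def conjRep {G : Type u} [Group G] {N : Subgroup G} (hN : N.Normal) {m : ℕ}
    (σ : N →* Matrix.unitaryGroup (Fin m) ℂ) (g : G) : N →* Matrix.unitaryGroup (Fin m) ℂ :=
  σ.comp (conjHom hN g)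

/-- Unitary equivalence of two finite-dimensional unitary representations. -/
def UnitarilyEquiv {G : Type u} [Group G] {m : ℕ}
    (σ τ : G →* Matrix.unitaryGroup (Fin m) ℂ) : Prop :=
  ∃ V : Matrix.unitaryGroup (Fin m) ℂ, ∀ g : G, τ g = V * σ g * V⁻¹

/-- Irreducibility of a finite-dimensional unitary representation. -/
def IsIrreducibleRep {G : Type u} [Group G] {m : ℕ}
    (σ : G →* Matrix.unitaryGroup (Fin m) ℂ) : Prop :=
  ∀ W : Submodule ℂ (Fin m → ℂ),
    (∀ g : G, ∀ v ∈ W, (σ g : Matrix (Fin m) (Fin m) ℂ).mulVec v ∈ W) → W = ⊥ ∨ W = ⊤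

/-- A representation of `N` has finite `H`-orbit if the conjugates `σ^h`, `h ∈ H`, fall into
finitely many unitary equivalence classes. -/
def HasFiniteHOrbit {G : Type u} [Group G] {N : Subgroup G} (hN : N.Normal) (H : Subgroup G)
    {m : ℕ} (σ : N →* Matrix.unitaryGroup (Fin m) ℂ) : Prop :=
  ∃ S : Finset (N →* Matrix.unitaryGroup (Fin m) ℂ),
    ∀ h ∈ H, ∃ τ ∈ S, UnitarilyEquiv (conjRep hN σ h) τ

/-- `(K, β)` is a Bohr compactification of `G`. -/
def IsBohrCompactification (G : Type u) [Group G] [TopologicalSpace G]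
    (K : Type v) [Group K] [TopologicalSpace K] [IsTopologicalGroup K] [CompactSpace K]
    [T2Space K] (β : G →* K) : Prop :=
  Continuous β ∧ DenseRange β ∧
    ∀ (L : Type w) [Group L] [TopologicalSpace L] [IsTopologicalGroup L] [CompactSpace L]
      [T2Space L] (α : G →* L), Continuous α →
        ∃ α' : K →* L, Continuous α' ∧ α = α'.comp β

/-- `(K, α)` is a profinite completion of `G`. -/
def IsProfiniteCompletion (G : Type u) [Group G] [TopologicalSpace G]
    (K : Type v) [Group K] [TopologicalSpace K] [IsTopologicalGroup K] [CompactSpace K]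
    [T2Space K] [TotallyDisconnectedSpace K] (α : G →* K) : Prop :=
  Continuous α ∧ DenseRange α ∧
    ∀ (L : Type w) [Group L] [TopologicalSpace L] [IsTopologicalGroup L] [CompactSpace L]
      [T2Space L] [TotallyDisconnectedSpace L] (γ : G →* L), Continuous γ →
        ∃ γ' : K →* L, Continuous γ' ∧ γ = γ'.comp α
/-- The restricted direct product `⊕_{h ∈ H} Λ`: finitely supported functions `H → Λ`. -/
def restrictedProduct (H : Type u) (Λ : Type v) [Group Λ] : Subgroup (H → Λ) where
  carrier := {f | (Function.mulSupport f).Finite}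
  one_mem' := by simp
  mul_mem' := by
    intro f g hf hg
    exact Set.Finite.subset (hf.union hg) (Function.mulSupport_mul f g)
  inv_mem' := by
    intro f hf
    simpa using hf

/-- The shift of a finitely supported function: `(h · f)(h') = f (h⁻¹ h')`. -/
def shiftEquiv (Λ : Type v) (H : Type u) [Group Λ] [Group H] (h : H) :
    restrictedProduct H Λ ≃* restrictedProduct H Λ where
  toFun f := ⟨fun h' => (f : H → Λ) (h⁻¹ * h'), by
    refine Set.Finite.subset (f.2.image (h * ·)) ?_
    intro h' hh'
    exact ⟨h⁻¹ * h', hh', by group⟩⟩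
  invFun f := ⟨fun h' => (f : H → Λ) (h * h'), by
    refine Set.Finite.subset (f.2.image (h⁻¹ * ·)) ?_
    intro h' hh'
    exact ⟨h * h', hh', by group⟩⟩
  left_inv f := by ext h'; simp
  right_inv f := by ext h'; simp
  map_mul' f g := by ext h'; simp [Subgroup.coe_mul]

/-- The shift action of `H` on `⊕_{h ∈ H} Λ`. -/
def shiftAut (Λ : Type v) (H : Type u) [Group Λ] [Group H] :
    H →* MulAut (restrictedProduct H Λ) where
  toFun h := shiftEquiv Λ H h
  map_one' := by
    ext f h'
    simp [shiftEquiv]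
  map_mul' h₁ h₂ := by
    ext f h'
    simp [shiftEquiv, mul_assoc]

/-- The wreath product `Λ ≀ H`. -/
def Wreath (Λ : Type v) (H : Type u) [Group Λ] [Group H] : Type (max u v) :=
  restrictedProduct H Λ ⋊[shiftAut Λ H] H

instance (Λ : Type v) (H : Type u) [Group Λ] [Group H] : Group (Wreath Λ H) :=
  inferInstanceAs (Group (restrictedProduct H Λ ⋊[shiftAut Λ H] H))
/-- The homomorphism `⊕_H Λ₁ →* ⊕_H Λ₂` induced by a homomorphism `Λ₁ →* Λ₂`. -/
def restrictedMap (H : Type u) {Λ₁ : Type v} {Λ₂ : Type w} [Group Λ₁] [Group Λ₂]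
    (f : Λ₁ →* Λ₂) : restrictedProduct H Λ₁ →* restrictedProduct H Λ₂ where
  toFun g := ⟨fun h => f ((g : H → Λ₁) h),
    Set.Finite.subset g.2 (Function.mulSupport_comp_subset (map_one f) _)⟩
  map_one' := by ext h; simp
  map_mul' a b := by ext h; simp

/-- The homomorphism `Λ₁ ≀ H →* Λ₂ ≀ H` induced by a homomorphism `Λ₁ →* Λ₂`. -/
def wreathMap (H : Type u) {Λ₁ : Type v} {Λ₂ : Type w} [Group Λ₁] [Group Λ₂] [Group H]
    (f : Λ₁ →* Λ₂) : Wreath Λ₁ H →* Wreath Λ₂ H :=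
  SemidirectProduct.map (restrictedMap H f) (MonoidHom.id H)
    (fun _ => DFunLike.ext _ _ fun _ => Subtype.ext (funext fun _ => rfl))

instance (Λ : Type v) (H : Type u) [Group Λ] [Group H] : TopologicalSpace (Wreath Λ H) := ⊥

instance (Λ : Type v) (H : Type u) [Group Λ] [Group H] : DiscreteTopology (Wreath Λ H) :=
  ⟨rfl⟩

instance (Λ : Type v) (H : Type u) [Group Λ] [Group H] : IsTopologicalGroup (Wreath Λ H) where
  continuous_mul := continuous_of_discreteTopology
  continuous_inv := continuous_of_discreteTopology

section AuxSmall

open Function Set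

/-- A space with a countable dense family (indexed by `ℕ`) that is T3 is small in any universe. -/
theorem small_of_denseRange_nat {X : Type u} [TopologicalSpace X] [T3Space X]
    (f : ℕ → X) (hf : DenseRange f) : Small.{w} X := by
  have hinj : Function.Injective (fun x : X => {S : Set ℕ | x ∈ closure (f '' S)}) := by
    intro x y hxy
    by_contra hne
    obtain ⟨t, htx, htc, hts⟩ := exists_mem_nhds_isClosed_subset
      ((isOpen_compl_singleton (x := y)).mem_nhds (by simpa using hne))
    have hxU : x ∈ interior t := mem_interior_iff_mem_nhds.2 htx
    have hmem : x ∈ closure (f '' (f ⁻¹' interior t)) := by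
      rw [Set.image_preimage_eq_inter_range]
      exact hf.open_subset_closure_inter isOpen_interior hxU
    have hmem' : y ∈ closure (f '' (f ⁻¹' interior t)) := by
      have h2 : (f ⁻¹' interior t) ∈ {S : Set ℕ | x ∈ closure (f '' S)} := hmem
      have hxy' : {S : Set ℕ | x ∈ closure (f '' S)} = {S : Set ℕ | y ∈ closure (f '' S)} := hxy
      rw [hxy'] at h2
      exact h2
    have hyt : y ∈ t :=
      (htc.closure_subset_iff.2 ((Set.image_preimage_subset _ _).trans interior_subset)) hmem'
    exact hts hyt rfl
  exact small_of_injective hinj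

end AuxSmall

section AuxShrink

variable {α : Type u} [Small.{w} α]

noncomputable instance Shrink.topologicalSpace [TopologicalSpace α] :
    TopologicalSpace (Shrink.{w} α) :=
  TopologicalSpace.induced (equivShrink α).symm inferInstance

/-- `Shrink α` is homeomorphic to `α`. -/
noncomputable def Shrink.homeomorph' [TopologicalSpace α] : Shrink.{w} α ≃ₜ α where
  toEquiv := (equivShrink α).symm
  continuous_toFun := continuous_induced_dom
  continuous_invFun := by
    have : Continuous (equivShrink α : α → Shrink.{w} α) :=
      continuous_induced_rng.2 (by rw [Equiv.symm_comp_self]; exact continuous_id)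
    exact this

noncomputable instance [TopologicalSpace α] [CompactSpace α] : CompactSpace (Shrink.{w} α) :=
  (Shrink.homeomorph' (α := α)).symm.compactSpace

noncomputable instance [TopologicalSpace α] [T2Space α] : T2Space (Shrink.{w} α) :=
  (Shrink.homeomorph' (α := α)).isEmbedding.t2Space

noncomputable instance [TopologicalSpace α] [TotallyDisconnectedSpace α] :
    TotallyDisconnectedSpace (Shrink.{w} α) := by
  rw [totallyDisconnectedSpace_iff]
  apply (Shrink.homeomorph' (α := α)).isEmbedding.isTotallyDisconnected
  exact isTotallyDisconnected_of_totallyDisconnectedSpace _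

lemma Shrink.continuous_mulEquiv [TopologicalSpace α] [Mul α] :
    Continuous (Shrink.mulEquiv (α := α) : Shrink.{w} α → α) :=
  (Shrink.homeomorph' (α := α)).continuous

lemma Shrink.continuous_mulEquiv_symm [TopologicalSpace α] [Mul α] :
    Continuous ((Shrink.mulEquiv (α := α)).symm : α → Shrink.{w} α) :=
  (Shrink.homeomorph' (α := α)).symm.continuous

noncomputable instance [TopologicalSpace α] [Group α] [IsTopologicalGroup α] :
    IsTopologicalGroup (Shrink.{w} α) where
  continuous_mul := by
    have h : (fun p : Shrink.{w} α × Shrink.{w} α => p.1 * p.2) = fun p =>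
        (Shrink.homeomorph' (α := α)).symm
          ((Shrink.homeomorph' (α := α)) p.1 * (Shrink.homeomorph' (α := α)) p.2) := rfl
    rw [h]
    exact (Shrink.homeomorph' (α := α)).symm.continuous.comp
      (((Shrink.homeomorph' (α := α)).continuous.comp continuous_fst).mul
        ((Shrink.homeomorph' (α := α)).continuous.comp continuous_snd))
  continuous_inv := by
    have h : (fun p : Shrink.{w} α => p⁻¹) = fun p =>
        (Shrink.homeomorph' (α := α)).symm ((Shrink.homeomorph' (α := α)) p)⁻¹ := rfl
    rw [h]
    exact (Shrink.homeomorph' (α := α)).symm.continuous.comp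
      (Shrink.homeomorph' (α := α)).continuous.inv

end AuxShrink

section AuxCompact

open Function Set

/-- In a compact group, `1` lies in the closure of the image of the nontrivial elements of any
infinite group. -/
theorem one_mem_closure_image_ne_one {L : Type v} [Group L] [TopologicalSpace L]
    [IsTopologicalGroup L] [CompactSpace L] {H : Type u} [Group H] [Infinite H] (g : H →* L) :
    (1 : L) ∈ closure (g '' {h : H | h ≠ 1}) := by
  rw [mem_closure_iff]
  intro U hU h1U
  obtain ⟨V, hV, hVU⟩ := exists_nhds_split_inv (hU.mem_nhds h1U)
  obtain ⟨W, hWV, hWopen, hW1⟩ := mem_nhds_iff.1 hV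
  have hcov : (Set.univ : Set L) ⊆ ⋃ l : L, (fun x => x * l) '' W := fun x _ =>
    Set.mem_iUnion.2 ⟨x, 1, hW1, one_mul x⟩
  obtain ⟨t, ht⟩ := isCompact_univ.elim_finite_subcover (fun l : L => (fun x => x * l) '' W)
    (fun l => (Homeomorph.mulRight l).isOpen_image.2 hWopen) hcov
  have hsel : ∀ h : H, ∃ l ∈ t, g h ∈ (fun x => x * l) '' W := by
    intro h
    have := ht (Set.mem_univ (g h))
    simpa using this
  choose sel hselt hselm using hsel
  have : ∃ h h' : H, h ≠ h' ∧ sel h = sel h' := by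
    obtain ⟨h, h', hne, heq⟩ := Finite.exists_ne_map_eq_of_infinite
      (fun h : H => (⟨sel h, hselt h⟩ : {l // l ∈ t}))
    exact ⟨h, h', hne, by simpa using heq⟩
  obtain ⟨h, h', hne, heq⟩ := this
  obtain ⟨w1, hw1, hgw1⟩ := hselm h
  obtain ⟨w2, hw2, hgw2⟩ := hselm h'
  refine ⟨g (h * h'⁻¹), ?_, ⟨h * h'⁻¹, ?_, rfl⟩⟩
  · have : g (h * h'⁻¹) = w1 / w2 := by
      rw [map_mul, map_inv, ← hgw1, ← hgw2, heq]
      simp [div_eq_mul_inv, mul_assoc]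
    rw [this]
    exact hVU w1 (hWV hw1) w2 (hWV hw2)
  · simp only [Set.mem_setOf_eq]
    intro hc
    exact hne (by rwa [mul_inv_eq_one] at hc)

end AuxCompact

section AuxCountable

open Function

instance restrictedProduct.countable (H : Type u) (Λ : Type v) [Group Λ] [Countable H]
    [Countable Λ] : Countable (restrictedProduct H Λ) := by
  classical
  have hfin : ∀ n : restrictedProduct H Λ, (Function.mulSupport (n : H → Λ)).Finite := fun n => n.2
  have key : ∀ n m : restrictedProduct H Λ,
      (hfin n).toFinset.image (fun k => (k, (n : H → Λ) k)) =
        (hfin m).toFinset.image (fun k => (k, (m : H → Λ) k)) →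
      ∀ k, (n : H → Λ) k ≠ 1 → (n : H → Λ) k = (m : H → Λ) k := by
    intro n m h k hk
    have hmem : (k, (n : H → Λ) k) ∈ (hfin m).toFinset.image (fun k => (k, (m : H → Λ) k)) := by
      rw [← h]
      exact Finset.mem_image_of_mem _ ((hfin n).mem_toFinset.2 hk)
    obtain ⟨j, _, hj2⟩ := Finset.mem_image.1 hmem
    have hj : j = k := congrArg Prod.fst hj2
    have hv := congrArg Prod.snd hj2
    subst hj
    exact hv.symm
  have hinj : Function.Injective (fun n : restrictedProduct H Λ =>
      ((hfin n).toFinset.image (fun k => (k, (n : H → Λ) k)) : Finset (H × Λ))) := by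
    intro n m h
    apply Subtype.ext; funext k
    by_cases hn : (n : H → Λ) k = 1
    · by_cases hm : (m : H → Λ) k = 1
      · rw [hn, hm]
      · exact (key m n h.symm k hm).symm
    · exact key n m h k hn
  exact hinj.countable

instance Abelianization.countable (G : Type u) [Group G] [Countable G] :
    Countable (Abelianization G) := by
  have hs : Function.Surjective (Abelianization.of (G := G)) := fun y =>
    QuotientGroup.induction_on y fun x => ⟨x, rfl⟩
  exact hs.countable

instance Wreath.countable (Λ : Type v) (H : Type u) [Group Λ] [Group H] [Countable Λ]
    [Countable H] : Countable (Wreath Λ H) := by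
  have hinj : Function.Injective (fun g : Wreath Λ H =>
      ((SemidirectProduct.left g, SemidirectProduct.right g) : restrictedProduct H Λ × H)) := by
    intro a b h
    exact SemidirectProduct.ext (congrArg Prod.fst h) (congrArg Prod.snd h)
  exact hinj.countable

end AuxCountable

section WreathAux

open Function

variable {Λ : Type v} {H : Type u} [Group Λ] [Group H]

/-- The embedding of `Λ` in coordinate `k` of the restricted product. -/
def singleR [DecidableEq H] (k : H) : Λ →* restrictedProduct H Λ :=
  (MonoidHom.mulSingle (fun _ : H => Λ) k).codRestrict (restrictedProduct H Λ)
    (fun _ => Set.Finite.subset (Set.finite_singleton k) Pi.mulSupport_mulSingle_subset)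

lemma coe_singleR [DecidableEq H] (k : H) (a : Λ) :
    ((singleR k a : restrictedProduct H Λ) : H → Λ) = Pi.mulSingle k a := rfl

lemma shiftAut_singleR [DecidableEq H] (h k : H) (a : Λ) :
    shiftAut Λ H h (singleR (Λ := Λ) k a) = singleR (h * k) a := by
  apply Subtype.ext
  funext h'
  have h1 : ((((shiftAut Λ H) h) (singleR (Λ := Λ) k a) : restrictedProduct H Λ) : H → Λ) h' =
      ((singleR (Λ := Λ) k a : restrictedProduct H Λ) : H → Λ) (h⁻¹ * h') := rfl
  rw [h1, coe_singleR, coe_singleR]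
  simp [Pi.mulSingle_apply, inv_mul_eq_iff_eq_mul]

/-- The canonical inclusion of the base group into the wreath product. -/
def wInl : restrictedProduct H Λ →* Wreath Λ H := SemidirectProduct.inl

/-- The canonical inclusion of `H` into the wreath product. -/
def wInr : H →* Wreath Λ H := SemidirectProduct.inr

lemma wconj (h : H) (n : restrictedProduct H Λ) :
    wInr (Λ := Λ) h * wInl n * (wInr (Λ := Λ) h)⁻¹ = wInl (shiftAut Λ H h n) := by
  rw [← map_inv]
  exact (SemidirectProduct.inl_aut (φ := shiftAut Λ H) h n).symm

lemma commute_singleR [DecidableEq H] {j k : H} (hjk : j ≠ k) (a b : Λ) :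
    Commute (wInl (singleR j a) : Wreath Λ H) (wInl (singleR k b)) := by
  have h1 : Commute (singleR (Λ := Λ) j a) (singleR k b) := by
    have h := Pi.mulSingle_commute (f := fun _ : H => Λ) hjk a b
    show _ = _
    apply Subtype.ext
    exact h.eq
  exact h1.map wInl

theorem key_commute {L : Type*} [Group L] [TopologicalSpace L] [IsTopologicalGroup L]
    [CompactSpace L] [T2Space L] [Infinite H] [DecidableEq H]
    (α : Wreath Λ H →* L) (k : H) (a b : Λ) :
    Commute (α (wInl (singleR k a))) (α (wInl (singleR k b))) := by
  set x := α (wInl (singleR k a)) with hx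
  set y := α (wInl (singleR k b)) with hy
  have hD : IsClosed {u : L | u * x * u⁻¹ * y = y * (u * x * u⁻¹)} := by
    apply isClosed_eq
    · exact ((continuous_id.mul continuous_const).mul continuous_inv).mul continuous_const
    · exact continuous_const.mul ((continuous_id.mul continuous_const).mul continuous_inv)
  have hsub : (α.comp wInr) '' {h : H | h ≠ 1} ⊆
      {u : L | u * x * u⁻¹ * y = y * (u * x * u⁻¹)} := by
    rintro _ ⟨h, hh, rfl⟩
    have e1 : (α.comp wInr) h * x * ((α.comp wInr) h)⁻¹ = α (wInl (singleR (h * k) a)) := by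
      rw [hx]
      simp only [MonoidHom.comp_apply]
      rw [← map_inv, ← map_mul, ← map_mul, wconj, shiftAut_singleR]
    have hc : Commute (α (wInl (singleR (h * k) a))) y := by
      rw [hy]
      refine (commute_singleR ?_ a b).map α
      intro hc
      exact hh (by rwa [mul_eq_right] at hc)
    show _ = _
    rw [e1]
    exact hc.eq
  have h1 : (1 : L) ∈ {u : L | u * x * u⁻¹ * y = y * (u * x * u⁻¹)} :=
    (hD.closure_subset_iff.2 hsub) (one_mem_closure_image_ne_one (α.comp wInr))
  have h2 := h1
  simp only [Set.mem_setOf_eq, one_mul, inv_one, mul_one] at h2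
  exact h2

theorem wreath_ker_le {L : Type*} [Group L] [TopologicalSpace L] [IsTopologicalGroup L]
    [CompactSpace L] [T2Space L] [Infinite H]
    (α : Wreath Λ H →* L) :
    (wreathMap H (Abelianization.of (G := Λ))).ker ≤ α.ker := by
  classical
  intro g hg
  rw [MonoidHom.mem_ker] at hg ⊢
  obtain ⟨n, h⟩ := g
  have hleft : restrictedMap H (Abelianization.of (G := Λ)) n = 1 :=
    congrArg SemidirectProduct.left hg
  have hright : h = 1 := congrArg SemidirectProduct.right hg
  subst hright
  have hcomm : ∀ k : H, (n : H → Λ) k ∈ commutator Λ := by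
    intro k
    have h1 : Abelianization.of ((n : H → Λ) k) = 1 :=
      congrFun (congrArg Subtype.val hleft) k
    exact (QuotientGroup.eq_one_iff _).1 h1
  have hrep : (⟨n, 1⟩ : Wreath Λ H) = wInl n := rfl
  rw [hrep]
  have main : ∀ (s : Finset H) (m : restrictedProduct H Λ),
      Function.mulSupport (m : H → Λ) ⊆ ↑s → (∀ k, (m : H → Λ) k ∈ commutator Λ) →
      α (wInl m) = 1 := by
    intro s
    induction s using Finset.induction_on with
    | empty =>
      intro m hsupp _
      have hm1 : m = 1 := by
        apply Subtype.ext; funext k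
        by_contra hk
        have := hsupp (Function.mem_mulSupport.2 hk)
        simpa using this
      rw [hm1, map_one, map_one]
    | @insert k₀ s' hk₀ ih =>
      intro m hsupp hval
      set m' : restrictedProduct H Λ := ⟨Function.update (m : H → Λ) k₀ 1, by
        show (Function.mulSupport _).Finite
        have hfin : (Function.mulSupport (m : H → Λ)).Finite := m.2
        apply hfin.subset
        intro j hj
        rw [Function.mem_mulSupport] at hj ⊢
        rcases eq_or_ne j k₀ with rfl | hne
        · rw [Function.update_self] at hj; exact absurd rfl hj
        · rwa [Function.update_of_ne hne] at hj⟩ with hm'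
      have hdecomp : m = singleR k₀ ((m : H → Λ) k₀) * m' := by
        apply Subtype.ext
        rw [Subgroup.coe_mul, coe_singleR,
          show ((m' : restrictedProduct H Λ) : H → Λ) = Function.update (m : H → Λ) k₀ 1 from rfl]
        funext j
        rw [Pi.mul_apply]
        rcases eq_or_ne j k₀ with rfl | hne
        · rw [Pi.mulSingle_apply, if_pos rfl, Function.update_self, mul_one]
        · rw [Pi.mulSingle_apply, if_neg hne, Function.update_of_ne hne, one_mul]
      rw [hdecomp, map_mul, map_mul]
      have h1 : α (wInl (singleR k₀ ((m : H → Λ) k₀))) = 1 := by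
        have hker : commutator Λ ≤ (α.comp (wInl.comp (singleR (Λ := Λ) k₀))).ker := by
          rw [commutator_def, Subgroup.commutator_le]
          intro p _ q _
          rw [MonoidHom.mem_ker]
          simp only [MonoidHom.comp_apply, map_commutatorElement]
          exact commutatorElement_eq_one_iff_commute.2 (key_commute α k₀ p q)
        exact hker (hval k₀)
      have hsupp' : Function.mulSupport (m' : H → Λ) ⊆ ↑s' := by
        intro j hj
        rw [Function.mem_mulSupport] at hj
        rcases eq_or_ne j k₀ with rfl | hne
        · exact absurd (Function.update_self j 1 (m : H → Λ)) hj
        · have hj' : (m : H → Λ) j ≠ 1 := by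
            rwa [show ((m' : H → Λ) j) = Function.update (m : H → Λ) k₀ 1 j from rfl,
              Function.update_of_ne hne] at hj
          have hmem := hsupp (Function.mem_mulSupport.2 hj')
          simp only [Finset.coe_insert, Set.mem_insert_iff] at hmem
          rcases hmem with rfl | hmem
          · exact absurd rfl hne
          · exact hmem
      have hval' : ∀ k, (m' : H → Λ) k ∈ commutator Λ := by
        intro k
        rcases eq_or_ne k k₀ with rfl | hne
        · show Function.update (m : H → Λ) k 1 k ∈ _
          rw [Function.update_self]; exact one_mem _
        · show Function.update (m : H → Λ) k₀ 1 k ∈ _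
          rw [Function.update_of_ne hne]; exact hval k
      rw [h1, ih m' hsupp' hval', one_mul]
  have hfin : (Function.mulSupport (n : H → Λ)).Finite := n.2
  exact main hfin.toFinset n (by rw [Set.Finite.coe_toFinset]) hcomm

theorem wreathMap_surjective {Λ₁ : Type v} {Λ₂ : Type w} [Group Λ₁] [Group Λ₂]
    {f : Λ₁ →* Λ₂} (hf : Function.Surjective f) :
    Function.Surjective (wreathMap H f) := by
  classical
  rintro ⟨m, h⟩
  have hfin : (Function.mulSupport (m : H → Λ₂)).Finite := m.2
  refine ⟨⟨⟨fun k => if (m : H → Λ₂) k = 1 then 1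
    else Function.surjInv hf ((m : H → Λ₂) k), ?_⟩, h⟩, ?_⟩
  · show (Function.mulSupport _).Finite
    apply hfin.subset
    intro k hk
    rw [Function.mem_mulSupport] at hk ⊢
    intro hc
    exact hk (by rw [if_pos hc])
  · apply SemidirectProduct.ext
    · apply Subtype.ext; funext k
      show f (if (m : H → Λ₂) k = 1 then 1
        else Function.surjInv hf ((m : H → Λ₂) k)) = (m : H → Λ₂) k
      split_ifs with hc
      · rw [map_one, hc]
      · exact Function.surjInv_eq hf _
    · rfl

theorem factor_through [Infinite H] {L : Type*} [Group L] [TopologicalSpace L]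
    [IsTopologicalGroup L] [CompactSpace L] [T2Space L] (α₀ : Wreath Λ H →* L) :
    ∃ αt : Wreath (Abelianization Λ) H →* L,
      α₀ = αt.comp (wreathMap H (Abelianization.of (G := Λ))) := by
  have hofs : Function.Surjective (Abelianization.of (G := Λ)) := fun y =>
    QuotientGroup.induction_on y fun x => ⟨x, rfl⟩
  have hsurj : Function.Surjective (wreathMap H (Abelianization.of (G := Λ))) :=
    wreathMap_surjective hofs
  refine ⟨(wreathMap H (Abelianization.of (G := Λ))).liftOfRightInverse
    (Function.surjInv hsurj) (Function.rightInverse_surjInv hsurj) ⟨α₀, wreath_ker_le α₀⟩, ?_⟩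
  have h := MonoidHom.liftOfRightInverse_comp (wreathMap H (Abelianization.of (G := Λ)))
    (Function.surjInv hsurj) (Function.rightInverse_surjInv hsurj) ⟨α₀, wreath_ker_le α₀⟩
  exact h.symm

end WreathAux

section AuxSmallRange

instance small_range_closure {G : Type u} [Group G] [Countable G] {L : Type v} [Group L]
    [TopologicalSpace L] [IsTopologicalGroup L] [CompactSpace L] [T2Space L] (αt : G →* L) :
    Small.{w} ↥(αt.range.topologicalClosure) := by
  haveI : CompactSpace ↥(αt.range.topologicalClosure) :=
    isCompact_iff_compactSpace.1 (αt.range.isClosed_topologicalClosure.isCompact)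
  obtain ⟨e, he⟩ := exists_surjective_nat G
  have hmem : ∀ g : G, αt g ∈ αt.range.topologicalClosure := fun g =>
    Subgroup.le_topologicalClosure _ ⟨g, rfl⟩
  refine small_of_denseRange_nat
    (fun n : ℕ => (⟨αt (e n), hmem (e n)⟩ : ↥(αt.range.topologicalClosure))) ?_
  intro x
  rw [closure_subtype]
  have himg : Subtype.val ''
      (Set.range fun n : ℕ => (⟨αt (e n), hmem (e n)⟩ : ↥(αt.range.topologicalClosure))) =
      Set.range (⇑αt ∘ e) := by
    rw [← Set.range_comp]; rfl
  rw [himg, Function.Surjective.range_comp he]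
  exact x.2

end AuxSmallRange
theorem wreath_bohr_and_prof_of_abelianization
    (Λ : Type u) (H : Type u) [Group Λ] [Group H] [Countable Λ] [Countable H] [Infinite H]
    (K : Type v) [Group K] [TopologicalSpace K] [IsTopologicalGroup K] [CompactSpace K]
    [T2Space K] (β : Wreath (Abelianization Λ) H →* K)
    (K' : Type w) [Group K'] [TopologicalSpace K'] [IsTopologicalGroup K'] [CompactSpace K']
    [T2Space K'] [TotallyDisconnectedSpace K']
    (α : Wreath (Abelianization Λ) H →* K') :
    (IsBohrCompactification (Wreath (Abelianization Λ) H) K β →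
      IsBohrCompactification (Wreath Λ H) K (β.comp (wreathMap H Abelianization.of))) ∧
      (IsProfiniteCompletion (Wreath (Abelianization Λ) H) K' α →
        IsProfiniteCompletion (Wreath Λ H) K' (α.comp (wreathMap H Abelianization.of))) := by
  constructor
  · rintro ⟨hc, hd, hu⟩
    have hofs : Function.Surjective (Abelianization.of (G := Λ)) := fun y =>
      QuotientGroup.induction_on y fun x => ⟨x, rfl⟩
    have hsurj : Function.Surjective (wreathMap H (Abelianization.of (G := Λ))) :=
      wreathMap_surjective hofs
    refine ⟨continuous_of_discreteTopology, ?_, ?_⟩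
    · have hr : Set.range ⇑(β.comp (wreathMap H (Abelianization.of (G := Λ)))) =
          Set.range ⇑β := by
        rw [MonoidHom.coe_comp, Set.range_comp, hsurj.range_eq, Set.image_univ]
      show Dense (Set.range ⇑(β.comp (wreathMap H Abelianization.of)))
      rw [hr]
      exact hd
    · intro L _ _ _ _ _ α₀ _
      obtain ⟨αt, hfac⟩ := factor_through α₀
      haveI : CompactSpace ↥(αt.range.topologicalClosure) :=
        isCompact_iff_compactSpace.1 (αt.range.isClosed_topologicalClosure.isCompact)
      have hmem : ∀ g, αt g ∈ αt.range.topologicalClosure := fun g =>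
        Subgroup.le_topologicalClosure _ ⟨g, rfl⟩
      obtain ⟨ψ', hψ'c, hψ'e⟩ := hu (Shrink ↥(αt.range.topologicalClosure))
        (((Shrink.mulEquiv (α := ↥(αt.range.topologicalClosure))).symm.toMonoidHom).comp
          (αt.codRestrict _ hmem)) continuous_of_discreteTopology
      refine ⟨((αt.range.topologicalClosure.subtype).comp
        (Shrink.mulEquiv (α := ↥(αt.range.topologicalClosure))).toMonoidHom).comp ψ', ?_, ?_⟩
      · exact (continuous_subtype_val.comp Shrink.continuous_mulEquiv).comp hψ'c
      · rw [hfac]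
        apply MonoidHom.ext; intro g
        have h2 := DFunLike.congr_fun hψ'e (wreathMap H (Abelianization.of (G := Λ)) g)
        simp only [MonoidHom.comp_apply] at h2 ⊢
        rw [← h2]
        simp [MulEquiv.coe_toMonoidHom, MulEquiv.apply_symm_apply,
          MonoidHom.codRestrict_apply, Subgroup.coe_subtype]
  · rintro ⟨hc, hd, hu⟩
    have hofs : Function.Surjective (Abelianization.of (G := Λ)) := fun y =>
      QuotientGroup.induction_on y fun x => ⟨x, rfl⟩
    have hsurj : Function.Surjective (wreathMap H (Abelianization.of (G := Λ))) :=
      wreathMap_surjective hofs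
    refine ⟨continuous_of_discreteTopology, ?_, ?_⟩
    · have hr : Set.range ⇑(α.comp (wreathMap H (Abelianization.of (G := Λ)))) =
          Set.range ⇑α := by
        rw [MonoidHom.coe_comp, Set.range_comp, hsurj.range_eq, Set.image_univ]
      show Dense (Set.range ⇑(α.comp (wreathMap H Abelianization.of)))
      rw [hr]
      exact hd
    · intro L _ _ _ _ _ _ α₀ _
      obtain ⟨αt, hfac⟩ := factor_through α₀
      haveI : CompactSpace ↥(αt.range.topologicalClosure) :=
        isCompact_iff_compactSpace.1 (αt.range.isClosed_topologicalClosure.isCompact)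
      have hmem : ∀ g, αt g ∈ αt.range.topologicalClosure := fun g =>
        Subgroup.le_topologicalClosure _ ⟨g, rfl⟩
      obtain ⟨ψ', hψ'c, hψ'e⟩ := hu (Shrink ↥(αt.range.topologicalClosure))
        (((Shrink.mulEquiv (α := ↥(αt.range.topologicalClosure))).symm.toMonoidHom).comp
          (αt.codRestrict _ hmem)) continuous_of_discreteTopology
      refine ⟨((αt.range.topologicalClosure.subtype).comp
        (Shrink.mulEquiv (α := ↥(αt.range.topologicalClosure))).toMonoidHom).comp ψ', ?_, ?_⟩
      · exact (continuous_subtype_val.comp Shrink.continuous_mulEquiv).comp hψ'c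
      · rw [hfac]
        apply MonoidHom.ext; intro g
        have h2 := DFunLike.congr_fun hψ'e (wreathMap H (Abelianization.of (G := Λ)) g)
        simp only [MonoidHom.comp_apply] at h2 ⊢
        rw [← h2]
        simp [MulEquiv.coe_toMonoidHom, MulEquiv.apply_symm_apply,
          MonoidHom.codRestrict_apply, Subgroup.coe_subtype]
end

section
/- Let Λ be a countable infinite group and H a countable infinite group, and let N = ⊕_{h∈H} Λ with H acting by shifting indices. Then every irreducible finite-dimensional unitary representation σ : N → U(m) whose H-orbit (the set of unitary-equivalence classes of the representations σ^h(n) = σ(h⁻¹·n), h ∈ H, where h⁻¹·n denotes the shift action) is finite, is one-dimensional, i.e., m may be taken to be 1 (σ(N) ⊆ U(1)). The same holds for any countable group Λ. -/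
universe u v w

open Filter Topology in
theorem aux_isCompact_unitary (m : ℕ) :
    IsCompact {U : Matrix (Fin m) (Fin m) ℂ | U ∈ Matrix.unitaryGroup (Fin m) ℂ} := by
  have hsub : {U : Matrix (Fin m) (Fin m) ℂ | U ∈ Matrix.unitaryGroup (Fin m) ℂ} ⊆
      Set.univ.pi (fun _ : Fin m => Set.univ.pi fun _ : Fin m => Metric.closedBall (0:ℂ) 1) := by
    intro U hU i _ j _
    simp only [Metric.mem_closedBall, dist_zero_right]
    have h1 : (star U * U) j j = 1 := by
      rw [(Matrix.mem_unitaryGroup_iff'.mp hU)]; simp [Matrix.one_apply]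
    rw [Matrix.mul_apply] at h1
    have h2 : ∀ k, (star U : Matrix (Fin m) (Fin m) ℂ) j k * U k j
        = (Complex.normSq (U k j) : ℂ) := by
      intro k
      rw [Matrix.star_apply, Complex.star_def, ← Complex.normSq_eq_conj_mul_self]
    rw [Finset.sum_congr rfl (fun k _ => h2 k)] at h1
    have h3 : ∑ k, Complex.normSq (U k j) = 1 := by
      have := h1
      push_cast at this
      exact_mod_cast this
    have h4 : Complex.normSq (U i j) ≤ 1 := by
      rw [← h3]
      exact Finset.single_le_sum (f := fun k => Complex.normSq (U k j))
        (fun k _ => Complex.normSq_nonneg _) (Finset.mem_univ i)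
    have h5 : ‖U i j‖ ^ 2 ≤ 1 := by rwa [Complex.sq_norm]
    nlinarith [norm_nonneg (U i j)]
  have hclosed : IsClosed {U : Matrix (Fin m) (Fin m) ℂ | U ∈ Matrix.unitaryGroup (Fin m) ℂ} := by
    have heq : {U : Matrix (Fin m) (Fin m) ℂ | U ∈ Matrix.unitaryGroup (Fin m) ℂ} =
        {U : Matrix (Fin m) (Fin m) ℂ | star U * U = 1} ∩ {U | U * star U = 1} := by
      ext U
      constructor
      · intro hU; exact ⟨Unitary.star_mul_self_of_mem hU, Unitary.mul_star_self_of_mem hU⟩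
      · rintro ⟨h1, h2⟩; exact ⟨h1, h2⟩
    rw [heq]
    refine IsClosed.inter ?_ ?_
    · exact isClosed_eq
        ((continuous_id.matrix_conjTranspose).matrix_mul continuous_id) continuous_const
    · exact isClosed_eq
        (continuous_id.matrix_mul (continuous_id.matrix_conjTranspose)) continuous_const
  exact IsCompact.of_isClosed_subset
    ((isCompact_univ_pi fun _ => isCompact_univ_pi fun _ => isCompact_closedBall 0 1))
    hclosed hsub

theorem aux_schur {G : Type*} [Group G] {m : ℕ} (hm : 1 ≤ m)
    (σ : G →* Matrix.unitaryGroup (Fin m) ℂ)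
    (hirr : ∀ W : Submodule ℂ (Fin m → ℂ),
      (∀ g : G, ∀ v ∈ W, (σ g : Matrix (Fin m) (Fin m) ℂ).mulVec v ∈ W) → W = ⊥ ∨ W = ⊤)
    (B : Matrix (Fin m) (Fin m) ℂ)
    (hB : ∀ g : G, B * (σ g : Matrix (Fin m) (Fin m) ℂ) = (σ g : Matrix (Fin m) (Fin m) ℂ) * B) :
    ∃ c : ℂ, B = c • (1 : Matrix (Fin m) (Fin m) ℂ) := by
  haveI : Nonempty (Fin m) := ⟨⟨0, hm⟩⟩
  obtain ⟨c, hc⟩ := Module.End.exists_eigenvalue (Matrix.mulVecLin B)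
  refine ⟨c, ?_⟩
  have hinv : ∀ g : G, ∀ v ∈ Module.End.eigenspace (Matrix.mulVecLin B) c,
      (σ g : Matrix (Fin m) (Fin m) ℂ).mulVec v ∈ Module.End.eigenspace (Matrix.mulVecLin B) c := by
    intro g v hv
    rw [Module.End.mem_eigenspace_iff] at hv ⊢
    rw [Matrix.mulVecLin_apply] at hv ⊢
    rw [Matrix.mulVec_mulVec, hB, ← Matrix.mulVec_mulVec, hv, Matrix.mulVec_smul]
  have hW : (Module.End.eigenspace (Matrix.mulVecLin B) c) = ⊤ := by
    rcases hirr (Module.End.eigenspace (Matrix.mulVecLin B) c) hinv with h | h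
    · exact absurd h hc
    · exact h
  ext i j
  have hsing : B.mulVec (Pi.single j 1) = c • (Pi.single j 1 : Fin m → ℂ) := by
    have := (Module.End.mem_eigenspace_iff).mp (hW ▸ Submodule.mem_top :
      (Pi.single j 1 : Fin m → ℂ) ∈ Module.End.eigenspace (Matrix.mulVecLin B) c)
    rwa [Matrix.mulVecLin_apply] at this
  have h2 := congrFun hsing i
  rw [Matrix.mulVec_single] at h2
  simp only [Pi.smul_apply, smul_eq_mul] at h2
  rw [MulOpposite.op_one, one_smul, Matrix.col_apply] at h2
  rw [h2, Matrix.smul_apply, Matrix.one_apply, Pi.single_apply]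
  by_cases h : i = j <;> simp [h, eq_comm]

theorem aux_final {G : Type*} [Group G] {m : ℕ} (hm : 1 ≤ m)
    (σ : G →* Matrix.unitaryGroup (Fin m) ℂ)
    (hirr : ∀ W : Submodule ℂ (Fin m → ℂ),
      (∀ g : G, ∀ v ∈ W, (σ g : Matrix (Fin m) (Fin m) ℂ).mulVec v ∈ W) → W = ⊥ ∨ W = ⊤)
    (hscal : ∀ g : G, ∃ c : ℂ, (σ g : Matrix (Fin m) (Fin m) ℂ) = c • 1) :
    m = 1 := by
  set e : Fin m → ℂ := Pi.single (⟨0, hm⟩ : Fin m) 1 with he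
  have he0 : e ≠ 0 := by
    intro h
    have := congrFun h ⟨0, hm⟩
    simp [he] at this
  have hinv : ∀ g : G, ∀ v ∈ (ℂ ∙ e), (σ g : Matrix (Fin m) (Fin m) ℂ).mulVec v ∈ (ℂ ∙ e) := by
    intro g v hv
    obtain ⟨c, hc⟩ := hscal g
    rw [hc, Matrix.smul_mulVec, Matrix.one_mulVec]
    exact Submodule.smul_mem _ c hv
  rcases hirr (ℂ ∙ e) hinv with h | h
  · exact absurd h (by simpa [Submodule.span_singleton_eq_bot] using he0)
  · have h1 : Module.finrank ℂ (ℂ ∙ e : Submodule ℂ (Fin m → ℂ)) = 1 := finrank_span_singleton he0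
    rw [h, finrank_top] at h1
    simpa using h1
open Filter Topology in
theorem finite_orbit_rep_of_wreath_base_is_one_dimensional
    (Λ : Type u) (H : Type v) [Group Λ] [Group H]
    [Countable Λ] [Countable H] [Infinite H]
    {m : ℕ} (hm : 1 ≤ m)
    (σ : restrictedProduct H Λ →* Matrix.unitaryGroup (Fin m) ℂ)
    (hirr : IsIrreducibleRep σ)
    (horb : ∃ S : Finset (restrictedProduct H Λ →* Matrix.unitaryGroup (Fin m) ℂ),
      ∀ h : H, ∃ τ ∈ S,
        UnitarilyEquiv (σ.comp ((shiftAut Λ H) h⁻¹).toMonoidHom) τ) :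
    m = 1 := by
  classical
  obtain ⟨S, hS⟩ := horb
  set R : H → (restrictedProduct H Λ →* Matrix.unitaryGroup (Fin m) ℂ) :=
    fun h => σ.comp ((shiftAut Λ H) h⁻¹).toMonoidHom with hRdef
  -- pigeonhole: some τ has infinitely many h equivalent to it
  have hfib : ∃ τ ∈ S, {h : H | UnitarilyEquiv (R h) τ}.Infinite := by
    by_contra hcon
    push_neg at hcon
    have huniv : (Set.univ : Set H) ⊆ ⋃ τ ∈ S, {h : H | UnitarilyEquiv (R h) τ} := by
      intro h _
      obtain ⟨τ, hτS, hτ⟩ := hS h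
      exact Set.mem_biUnion hτS hτ
    have hfin : (Set.univ : Set H).Finite := by
      refine Set.Finite.subset (Set.Finite.biUnion S.finite_toSet ?_) huniv
      intro τ hτ
      exact hcon τ hτ
    exact Set.infinite_univ hfin
  obtain ⟨τ, hτS, hT⟩ := hfib
  set T := {h : H | UnitarilyEquiv (R h) τ} with hTdef
  set t : ℕ → H := fun k => ((Set.Infinite.natEmbedding T hT) k : H) with htdef
  have ht_inj : Function.Injective t := fun a b hab => by
    have := Subtype.coe_injective hab
    exact (Set.Infinite.natEmbedding T hT).injective this
  have htT : ∀ k, t k ∈ T := fun k => ((Set.Infinite.natEmbedding T hT) k).2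
  set s : ℕ → H := fun k => (t 0)⁻¹ * t k with hsdef
  have hs_inj : Function.Injective s := fun a b hab => ht_inj (by
    have : (t 0)⁻¹ * t a = (t 0)⁻¹ * t b := hab
    exact mul_left_cancel this)
  -- the main scalar claim
  have hscal : ∀ n₀ : restrictedProduct H Λ,
      ∃ c : ℂ, (σ n₀ : Matrix (Fin m) (Fin m) ℂ) = c • 1 := by
    intro n₀
    -- conjugates of σ n₀ realized at shifted positions
    have hconj : ∀ k : ℕ, ∃ V : Matrix.unitaryGroup (Fin m) ℂ,
        σ ((shiftAut Λ H (s k)) n₀) = V * σ n₀ * V⁻¹ := by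
      intro k
      obtain ⟨V0, hV0⟩ := htT 0
      obtain ⟨Vk, hVk⟩ := htT k
      refine ⟨V0⁻¹ * Vk, ?_⟩
      have e1 : R (t k) ((shiftAut Λ H (t k)) n₀) = σ n₀ := by
        simp only [hRdef, MonoidHom.comp_apply, MulEquiv.coe_toMonoidHom]
        rw [map_inv]
        congr 1
        exact MulEquiv.symm_apply_apply _ _
      have e2 : R (t 0) ((shiftAut Λ H (t k)) n₀) = σ ((shiftAut Λ H (s k)) n₀) := by
        simp only [hRdef, MonoidHom.comp_apply, MulEquiv.coe_toMonoidHom]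
        congr 1
        rw [hsdef]
        simp only [map_mul, MulAut.mul_apply]
      have h1 := hVk ((shiftAut Λ H (t k)) n₀)
      have h2 := hV0 ((shiftAut Λ H (t k)) n₀)
      rw [e1] at h1
      rw [e2] at h2
      have h3 : σ ((shiftAut Λ H (s k)) n₀) = V0⁻¹ * (τ ((shiftAut Λ H (t k)) n₀)) * V0 := by
        rw [h2]; group
      rw [h3, h1]
      group
    choose V hV using hconj
    -- extract a convergent subsequence of the conjugating unitaries
    have hmem : ∀ k, ((V k : Matrix (Fin m) (Fin m) ℂ)) ∈
        {U : Matrix (Fin m) (Fin m) ℂ | U ∈ Matrix.unitaryGroup (Fin m) ℂ} := fun k => (V k).2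
    haveI : FirstCountableTopology (Matrix (Fin m) (Fin m) ℂ) :=
      inferInstanceAs (FirstCountableTopology (Fin m → Fin m → ℂ))
    obtain ⟨W, hWmem, φ, hφ, hlim⟩ := (aux_isCompact_unitary m).tendsto_subseq hmem
    set B : Matrix (Fin m) (Fin m) ℂ := W * (σ n₀ : Matrix (Fin m) (Fin m) ℂ) * star W with hBdef
    set C : ℕ → Matrix (Fin m) (Fin m) ℂ :=
      fun k => (V k : Matrix (Fin m) (Fin m) ℂ) * (σ n₀ : Matrix (Fin m) (Fin m) ℂ)
        * star (V k : Matrix (Fin m) (Fin m) ℂ) with hCdef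
    have hC : ∀ k, C k = (σ ((shiftAut Λ H (s k)) n₀) : Matrix (Fin m) (Fin m) ℂ) := by
      intro k
      rw [hV k]
      simp [hCdef]
    have hcont : Continuous (fun X : Matrix (Fin m) (Fin m) ℂ =>
        X * (σ n₀ : Matrix (Fin m) (Fin m) ℂ) * star X) :=
      (continuous_id.matrix_mul continuous_const).matrix_mul
        (continuous_id.matrix_conjTranspose)
    have hlimC : Tendsto (fun k => C (φ k)) atTop (𝓝 B) := by
      have := (hcont.tendsto W).comp hlim
      exact this
    -- B commutes with the whole image of σ
    have hBcom : ∀ n' : restrictedProduct H Λ,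
        B * (σ n' : Matrix (Fin m) (Fin m) ℂ) = (σ n' : Matrix (Fin m) (Fin m) ℂ) * B := by
      intro n'
      set badS : Set H :=
        Set.image2 (fun x a => x * a⁻¹) (Function.mulSupport (n' : H → Λ))
          (Function.mulSupport (n₀ : H → Λ)) with hbadSdef
      have hbadS_fin : badS.Finite := Set.Finite.image2 _ n'.2 n₀.2
      have hcomm : ∀ z : H, z ∉ badS →
          (shiftAut Λ H z) n₀ * n' = n' * (shiftAut Λ H z) n₀ := by
        intro z hz
        apply Subtype.ext
        funext x
        have hco : ∀ (a b : restrictedProduct H Λ), ((a * b : restrictedProduct H Λ) : H → Λ) x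
            = (a : H → Λ) x * (b : H → Λ) x := fun a b => rfl
        rw [hco, hco]
        have hshift : (((shiftAut Λ H z) n₀ : restrictedProduct H Λ) : H → Λ) x
            = (n₀ : H → Λ) (z⁻¹ * x) := rfl
        rw [hshift]
        by_cases hx : (n' : H → Λ) x = 1
        · rw [hx, mul_one, one_mul]
        by_cases ha : (n₀ : H → Λ) (z⁻¹ * x) = 1
        · rw [ha, mul_one, one_mul]
        exfalso
        apply hz
        refine ⟨x, hx, z⁻¹ * x, ha, ?_⟩
        group
      have hbadk_fin : {k : ℕ | s k ∈ badS}.Finite := by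
        have : {k : ℕ | s k ∈ badS} ⊆ s ⁻¹' badS := fun k hk => hk
        exact Set.Finite.subset (Set.Finite.preimage (hs_inj.injOn) hbadS_fin) this
      have hev0 : ∀ᶠ k in atTop, s k ∉ badS := by
        rw [← Nat.cofinite_eq_atTop]
        exact hbadk_fin.eventually_cofinite_notMem
      have hev1 : ∀ᶠ k in atTop, s (φ k) ∉ badS := (hφ.tendsto_atTop).eventually hev0
      have hev : ∀ᶠ k in atTop,
          C (φ k) * (σ n' : Matrix (Fin m) (Fin m) ℂ)
            = (σ n' : Matrix (Fin m) (Fin m) ℂ) * C (φ k) := by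
        refine hev1.mono fun k hk => ?_
        rw [hC (φ k)]
        have := congrArg (fun z : restrictedProduct H Λ => (σ z : Matrix (Fin m) (Fin m) ℂ))
          (hcomm (s (φ k)) hk)
        simpa [map_mul] using this
      have l1 : Tendsto (fun k => C (φ k) * (σ n' : Matrix (Fin m) (Fin m) ℂ)) atTop
          (𝓝 (B * (σ n' : Matrix (Fin m) (Fin m) ℂ))) :=
        ((continuous_id.matrix_mul continuous_const).tendsto B).comp hlimC
      have l2 : Tendsto (fun k => (σ n' : Matrix (Fin m) (Fin m) ℂ) * C (φ k)) atTop
          (𝓝 ((σ n' : Matrix (Fin m) (Fin m) ℂ) * B)) :=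
        ((continuous_const.matrix_mul continuous_id).tendsto B).comp hlimC
      exact tendsto_nhds_unique_of_eventuallyEq l1 l2 hev
    obtain ⟨c, hc⟩ := aux_schur hm σ hirr B hBcom
    refine ⟨c, ?_⟩
    have hWu : star W * W = 1 := Unitary.star_mul_self_of_mem hWmem
    have h1 : star W * B * W = (σ n₀ : Matrix (Fin m) (Fin m) ℂ) := by
      rw [hBdef]
      have : star W * (W * (σ n₀ : Matrix (Fin m) (Fin m) ℂ) * star W) * W
          = (star W * W) * (σ n₀ : Matrix (Fin m) (Fin m) ℂ) * (star W * W) := by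
        noncomm_ring
      rw [this, hWu, one_mul, mul_one]
    rw [← h1, hc]
    rw [mul_smul_comm, smul_mul_assoc, mul_one, hWu]
  exact aux_final hm σ hirr hscal
end

section
/- Let Λ and H be countable discrete groups with Λ having at least two elements. Then the wreath product Λ ≀ H is maximally almost periodic if and only if Λ is maximally almost periodic, H is residually finite, and either H is finite or Λ is abelian. -/
universe u v w

/-- A discrete group is maximally almost periodic if its finite-dimensional unitary
representations separate points. -/
def IsMAPGroup (G : Type u) [Group G] : Prop :=
  ∀ g : G, g ≠ 1 → ∃ (n : ℕ), 1 ≤ n ∧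
    ∃ π : G →* Matrix.unitaryGroup (Fin n) ℂ, π g ≠ 1

/-- A discrete group is residually finite if every nontrivial element is sent to a nontrivial
element by some homomorphism onto a finite group. -/
def IsRFGroup (G : Type u) [Group G] : Prop :=
  ∀ g : G, g ≠ 1 → ∃ (F : Type) (_ : Group F) (_ : Finite F) (π : G →* F),
    Function.Surjective π ∧ π g ≠ 1


noncomputable section
namespace WPaux

open Matrix Function
open scoped ComplexInnerProductSpace

variable {m : ℕ}

/-- matrix as linear endomorphism of Euclidean space -/
abbrev opOf (A : Matrix (Fin m) (Fin m) ℂ) :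
    EuclideanSpace ℂ (Fin m) →ₗ[ℂ] EuclideanSpace ℂ (Fin m) :=
  Matrix.toEuclideanLin A

lemma opOf_mul (A B : Matrix (Fin m) (Fin m) ℂ) (v : EuclideanSpace ℂ (Fin m)) :
    opOf (A * B) v = opOf A (opOf B v) := by
  simp [opOf, Matrix.toEuclideanLin_apply, Matrix.mulVec_mulVec]

lemma opOf_one (v : EuclideanSpace ℂ (Fin m)) : opOf (1 : Matrix (Fin m) (Fin m) ℂ) v = v := by
  simp [opOf, Matrix.toEuclideanLin_apply]

lemma opOf_inj : Function.Injective (opOf (m := m)) := Matrix.toEuclideanLin.injective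

section eigen

variable {ι : Type*} (T : ι → Matrix.unitaryGroup (Fin m) ℂ)

/-- the endomorphisms -/
abbrev Sop (i : ι) : EuclideanSpace ℂ (Fin m) →ₗ[ℂ] EuclideanSpace ℂ (Fin m) := opOf (T i).1

lemma exists_jev (hcomm : ∀ i j, (T i).1 * (T j).1 = (T j).1 * (T i).1) :
    ∀ (k : ℕ) (V : Submodule ℂ (EuclideanSpace ℂ (Fin m))), Module.finrank ℂ V = k → V ≠ ⊥ →
      (∀ i, ∀ v ∈ V, Sop T i v ∈ V) →
      ∃ v ∈ V, v ≠ 0 ∧ ∀ i, ∃ c : ℂ, Sop T i v = c • v := by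
  have hScomm : ∀ i j v, Sop T i (Sop T j v) = Sop T j (Sop T i v) := by
    intro i j v
    rw [← opOf_mul, ← opOf_mul, hcomm]
  intro k
  induction k using Nat.strong_induction_on with
  | _ k IH =>
    intro V hrank hne hinv
    by_cases hsc : ∀ i, ∃ c : ℂ, ∀ v ∈ V, Sop T i v = c • v
    · obtain ⟨v, hvV, hv0⟩ := Submodule.exists_mem_ne_zero_of_ne_bot hne
      exact ⟨v, hvV, hv0, fun i => (hsc i).imp fun c hc => hc v hvV⟩
    · push_neg at hsc
      obtain ⟨i0, hi0⟩ := hsc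
      haveI : Nontrivial V := Submodule.nontrivial_iff_ne_bot.mpr hne
      set R : Module.End ℂ V := (Sop T i0).restrict (hinv i0) with hR
      obtain ⟨μ, hμ⟩ := Module.End.exists_eigenvalue R
      obtain ⟨w, hw⟩ := hμ.exists_hasEigenvector
      have hweig : Sop T i0 (w : EuclideanSpace ℂ (Fin m)) = μ • (w : EuclideanSpace ℂ (Fin m)) := by
        have h1 : R w = μ • w := Module.End.mem_eigenspace_iff.mp hw.1
        have h2 := congrArg (Subtype.val) h1
        simpa [hR, LinearMap.restrict_apply] using h2
      set V' : Submodule ℂ (EuclideanSpace ℂ (Fin m)) :=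
        V ⊓ Module.End.eigenspace (Sop T i0 : Module.End ℂ (EuclideanSpace ℂ (Fin m))) μ with hV'
      have hV'le : V' ≤ V := inf_le_left
      have hwV' : (w : EuclideanSpace ℂ (Fin m)) ∈ V' := by
        refine Submodule.mem_inf.mpr ⟨w.2, ?_⟩
        exact Module.End.mem_eigenspace_iff.mpr hweig
      have hV'ne : V' ≠ ⊥ := by
        intro hbot
        have : (w : EuclideanSpace ℂ (Fin m)) = 0 := by
          rw [hbot] at hwV'; simpa using hwV'
        exact hw.2 (by exact_mod_cast Subtype.ext this)
      have hV'lt : V' < V := by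
        refine lt_of_le_of_ne hV'le ?_
        intro he
        obtain ⟨v, hvV, hvne⟩ := hi0 μ
        have : v ∈ V' := he ▸ hvV
        exact hvne (Module.End.mem_eigenspace_iff.mp (Submodule.mem_inf.mp this).2)
      have hV'inv : ∀ i, ∀ v ∈ V', Sop T i v ∈ V' := by
        intro i v hv
        obtain ⟨hv1, hv2⟩ := Submodule.mem_inf.mp hv
        refine Submodule.mem_inf.mpr ⟨hinv i v hv1, ?_⟩
        rw [Module.End.mem_eigenspace_iff] at hv2 ⊢
        show Sop T i0 (Sop T i v) = μ • Sop T i v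
        rw [hScomm i0 i v, hv2, _root_.map_smul]
      have hrk : Module.finrank ℂ V' < k := by
        rw [← hrank]; exact Submodule.finrank_lt_finrank_of_lt hV'lt
      obtain ⟨v, hvV', hv⟩ := IH _ hrk V' rfl hV'ne hV'inv
      exact ⟨v, hV'le hvV', hv⟩

/-- joint eigenvectors -/
def JEv : Set (EuclideanSpace ℂ (Fin m)) :=
  {v | v ≠ 0 ∧ ∀ i, ∃ c : ℂ, Sop T i v = c • v}

lemma span_JEv (hcomm : ∀ i j, (T i).1 * (T j).1 = (T j).1 * (T i).1) :
    Submodule.span ℂ (JEv T) = ⊤ := by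
  set W := Submodule.span ℂ (JEv T) with hW
  have hstar : ∀ i, ∀ v ∈ JEv T, opOf (star (T i).1) v ∈ W := by
    intro i v hv
    obtain ⟨hv0, hvieg⟩ := hv
    obtain ⟨c, hc⟩ := hvieg i
    have hsv : opOf (star (T i).1) (Sop T i v) = v := by
      rw [← opOf_mul, (T i).2.1, opOf_one]
    have hc0 : c ≠ 0 := by
      intro h0
      rw [h0, zero_smul] at hc
      rw [hc, _root_.map_zero] at hsv
      exact hv0 hsv.symm
    have hkey : opOf (star (T i).1) v = c⁻¹ • v := by
      have h1 := hsv
      rw [hc, _root_.map_smul] at h1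
      have h2 := congrArg (fun x => c⁻¹ • x) h1
      simp only [smul_smul, inv_mul_cancel₀ hc0, one_smul] at h2
      exact h2
    rw [hkey]
    exact Submodule.smul_mem _ _ (Submodule.subset_span ⟨hv0, hvieg⟩)
  have hWstar : ∀ i, ∀ v ∈ W, opOf (star (T i).1) v ∈ W := by
    intro i v hv
    induction hv using Submodule.span_induction with
    | mem x hx => exact hstar i x hx
    | zero => rw [_root_.map_zero]; exact Submodule.zero_mem W
    | add x y _ _ hx hy => rw [_root_.map_add]; exact Submodule.add_mem _ hx hy
    | smul a x _ hx => rw [_root_.map_smul]; exact Submodule.smul_mem _ _ hx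
  by_contra hne
  have horth : Wᗮ ≠ ⊥ := by
    intro h
    exact hne (Submodule.orthogonal_eq_bot_iff.mp h)
  have hoinv : ∀ i, ∀ v ∈ Wᗮ, Sop T i v ∈ Wᗮ := by
    intro i v hv
    rw [Submodule.mem_orthogonal] at hv ⊢
    intro u hu
    have hadj : (inner ℂ u (Sop T i v) : ℂ) = (inner ℂ (opOf (star (T i).1) u) v : ℂ) := by
      have h := LinearMap.adjoint_inner_left (Matrix.toEuclideanLin (T i).1) v u
      rw [← Matrix.toEuclideanLin_conjTranspose_eq_adjoint] at h
      rw [Matrix.star_eq_conjTranspose]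
      exact h.symm
    rw [hadj]
    exact hv _ (hWstar i u hu)
  obtain ⟨v, hvW, hv0, hveig⟩ := exists_jev T hcomm _ Wᗮ rfl horth hoinv
  have hvW' : v ∈ W := Submodule.subset_span ⟨hv0, hveig⟩
  have : (inner ℂ v v : ℂ) = 0 := (Submodule.mem_orthogonal _ _).mp hvW v hvW'
  exact hv0 (inner_self_eq_zero.mp this)

lemma eig_indep (s : Finset (ι → ℂ)) :
    ∀ (v : (ι → ℂ) → EuclideanSpace ℂ (Fin m)),
      (∀ χ ∈ s, v χ ≠ 0) → (∀ χ ∈ s, ∀ i, Sop T i (v χ) = χ i • v χ) →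
      ∀ (a : (ι → ℂ) → ℂ), (∑ χ ∈ s, a χ • v χ = 0) → ∀ χ ∈ s, a χ = 0 := by
  classical
  induction s using Finset.induction_on with
  | empty => intro v _ _ a _ χ h; simp at h
  | @insert χ0 s hχ0 IH =>
    intro v h0 he a hsum
    have key : ∀ χ ∈ s, a χ = 0 := by
      intro χ hχ
      have hne : χ ≠ χ0 := by rintro rfl; exact hχ0 hχ
      obtain ⟨k, hk⟩ : ∃ k, χ k ≠ χ0 k := by
        by_contra hcon
        push_neg at hcon
        exact hne (funext hcon)
      have happ : ∑ x ∈ s, ((a x * (x k - χ0 k)) • v x) = 0 := by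
        have h1 : Sop T k (∑ x ∈ insert χ0 s, a x • v x)
            - χ0 k • (∑ x ∈ insert χ0 s, a x • v x) = 0 := by
          rw [hsum, _root_.map_zero, smul_zero, sub_zero]
        rw [_root_.map_sum, Finset.smul_sum, ← Finset.sum_sub_distrib] at h1
        have h2 : ∀ x ∈ insert χ0 s, Sop T k (a x • v x) - χ0 k • (a x • v x)
            = (a x * (x k - χ0 k)) • v x := by
          intro x hx
          rw [_root_.map_smul, he x hx k, smul_smul, smul_smul, ← sub_smul]
          ring_nf
        rw [Finset.sum_congr rfl h2, Finset.sum_insert hχ0] at h1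
        simpa using h1
      have hb := IH v (fun χ' hχ' => h0 χ' (Finset.mem_insert_of_mem hχ'))
        (fun χ' hχ' => he χ' (Finset.mem_insert_of_mem hχ'))
        (fun χ' => a χ' * (χ' k - χ0 k)) happ
      have := hb χ hχ
      exact (mul_eq_zero.mp this).resolve_right (sub_ne_zero.mpr hk)
    have hχ0z : a χ0 = 0 := by
      have h1 : ∑ χ ∈ s, a χ • v χ = 0 :=
        Finset.sum_eq_zero fun χ hχ => by rw [key χ hχ, zero_smul]
      rw [Finset.sum_insert hχ0, h1, add_zero] at hsum
      have := h0 χ0 (Finset.mem_insert_self _ _)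
      exact (smul_eq_zero.mp hsum).resolve_right this
    intro χ hχ
    rcases Finset.mem_insert.mp hχ with rfl | hχ
    · exact hχ0z
    · exact key χ hχ

end eigen
end WPaux

namespace WPaux

noncomputable section
open scoped Classical

variable {Λ : Type u} {H : Type v} [Group Λ] [Group H]

/-- The element of the restricted product supported at `k` with value `x`. -/
def delta (k : H) (x : Λ) : restrictedProduct H Λ :=
  ⟨fun h' => if h' = k then x else 1, by
    apply Set.Finite.subset (Set.finite_singleton k)
    intro h' hh'
    simp only [Function.mem_mulSupport] at hh'
    by_contra hne
    simp only [Set.mem_singleton_iff] at hne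
    exact hh' (if_neg hne)⟩

lemma delta_apply (k : H) (x : Λ) (h' : H) :
    ((delta k x : restrictedProduct H Λ) : H → Λ) h' = if h' = k then x else 1 := rfl

lemma one_apply' (h' : H) : ((1 : restrictedProduct H Λ) : H → Λ) h' = 1 := rfl

lemma mul_apply' (f g : restrictedProduct H Λ) (h' : H) :
    ((f * g : restrictedProduct H Λ) : H → Λ) h' = (f : H → Λ) h' * (g : H → Λ) h' := rfl

lemma inv_apply' (f : restrictedProduct H Λ) (h' : H) :
    ((f⁻¹ : restrictedProduct H Λ) : H → Λ) h' = ((f : H → Λ) h')⁻¹ := rfl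

/-- `delta k` as a homomorphism. -/
def deltaHom (k : H) : Λ →* restrictedProduct H Λ :=
  MonoidHom.mk' (fun x => delta k x) (by
    intro a b
    apply Subtype.ext
    funext h'
    simp only [mul_apply', delta_apply]
    by_cases h : h' = k <;> simp [h])

lemma delta_mul_comm {k k' : H} (hkk' : k ≠ k') (x y : Λ) :
    delta k x * delta k' y = delta k' y * delta k x := by
  apply Subtype.ext
  funext h'
  simp only [mul_apply', delta_apply]
  by_cases h1 : h' = k
  · subst h1
    rw [if_pos rfl, if_neg hkk']
    simp
  · by_cases h2 : h' = k'
    · subst h2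
      rw [if_neg h1, if_pos rfl]
      try simp
    · rw [if_neg h1, if_neg h2]
      try simp

lemma delta_ne_one {x : Λ} (hx : x ≠ 1) (k : H) : delta k x ≠ (1 : restrictedProduct H Λ) := by
  intro h
  have := congrFun (congrArg Subtype.val h) k
  simp only [delta_apply, if_pos rfl, one_apply'] at this
  exact hx this

lemma shift_delta (h k : H) (x : Λ) :
    (shiftAut Λ H h) (delta k x) = delta (h * k) x := by
  apply Subtype.ext
  funext h'
  show (if h⁻¹ * h' = k then x else 1) = if h' = h * k then x else 1
  congr 1
  simp [inv_mul_eq_iff_eq_mul]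

/-- inclusion of the base group into the wreath product -/
def wInl : restrictedProduct H Λ →* Wreath Λ H := SemidirectProduct.inl

/-- inclusion of the acting group into the wreath product -/
def wInr : H →* Wreath Λ H := SemidirectProduct.inr

/-- inclusion of `Λ` into the wreath product at position `1`. -/
def iota : Λ →* Wreath Λ H := wInl.comp (deltaHom 1)

lemma wInl_injective : Function.Injective (wInl (Λ := Λ) (H := H)) :=
  SemidirectProduct.inl_injective

lemma iota_ne_one {x : Λ} (hx : x ≠ 1) : (iota x : Wreath Λ H) ≠ 1 := by
  intro h
  have : delta (1 : H) x = (1 : restrictedProduct H Λ) := by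
    apply wInl_injective
    simpa [iota, deltaHom] using h
  exact delta_ne_one hx 1 this

lemma winr_winl_delta (h k : H) (x : Λ) :
    (wInr h : Wreath Λ H) * wInl (delta k x) * (wInr h)⁻¹ = wInl (delta (h * k) x) := by
  rw [← shift_delta h k x, ← map_inv wInr h]
  exact (SemidirectProduct.inl_aut (φ := shiftAut Λ H) h (delta k x)).symm

lemma winl_delta_mul_winr (h k : H) (x : Λ) :
    (wInl (delta k x) : Wreath Λ H) * wInr h = wInr h * wInl (delta (h⁻¹ * k) x) := by
  have := winr_winl_delta (Λ := Λ) h (h⁻¹ * k) x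
  rw [mul_inv_cancel_left] at this
  rw [← this]
  group

lemma winr_iota_conj (h : H) (x : Λ) :
    (wInr h : Wreath Λ H) * iota x * (wInr h)⁻¹ = wInl (delta h x) := by
  have := winr_winl_delta (Λ := Λ) h 1 x
  rw [mul_one] at this
  exact this

end
end WPaux

namespace WPaux

noncomputable section
open scoped Classical

variable {Λ : Type u} {H : Type v} [Group Λ] [Group H]

theorem isMAP_lambda (hMAP : IsMAPGroup (Wreath Λ H)) : IsMAPGroup Λ := by
  intro x hx
  obtain ⟨n, hn, π, hπ⟩ := hMAP (iota x) (iota_ne_one hx)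
  exact ⟨n, hn, π.comp iota, hπ⟩

theorem isRF_H (hMAP : IsMAPGroup (Wreath Λ H)) (lam : Λ) (hlam : lam ≠ 1) : IsRFGroup H := by
  intro h0 hh0
  have hw : (wInl (delta (1:H) lam) * (wInl (delta h0 lam))⁻¹ : Wreath Λ H) ≠ 1 := by
    rw [← map_inv, ← map_mul]
    intro hc
    have h1 : delta (1:H) lam * (delta h0 lam)⁻¹ = 1 := wInl_injective (by simpa using hc)
    have h2 := congrFun (congrArg Subtype.val h1) 1
    simp only [mul_apply', inv_apply', delta_apply, if_pos rfl, one_apply'] at h2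
    rw [if_neg (fun hc' : (1:H) = h0 => hh0 hc'.symm)] at h2
    simp only [inv_one, mul_one] at h2
    exact hlam h2
  obtain ⟨m, hm, π, hπ⟩ := hMAP _ hw
  set T : H → Matrix.unitaryGroup (Fin m) ℂ := fun k => π (wInl (delta k lam)) with hT
  set P : H →* Matrix.unitaryGroup (Fin m) ℂ := π.comp wInr with hP
  have hTP : ∀ h k : H, T k * P h = P h * T (h⁻¹ * k) := by
    intro h k
    have h1 := congrArg π (winl_delta_mul_winr (Λ := Λ) h k lam)
    rw [map_mul, map_mul] at h1
    exact h1
  have hcomm : ∀ i j : H, (T i).1 * (T j).1 = (T j).1 * (T i).1 := by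
    intro i j
    rcases eq_or_ne i j with rfl | hij
    · rfl
    · have h1 : T i * T j = T j * T i := by
        show π (wInl (delta i lam)) * π (wInl (delta j lam))
            = π (wInl (delta j lam)) * π (wInl (delta i lam))
        rw [← map_mul, ← map_mul wInl, delta_mul_comm hij, map_mul wInl, map_mul]
      exact congrArg Subtype.val h1
  have hTne : T h0 ≠ T 1 := by
    intro he
    apply hπ
    rw [map_mul, map_inv]
    show T 1 * (T h0)⁻¹ = 1
    rw [he, mul_inv_cancel]
  set X : Set (H → ℂ) := {χ | ∃ v, v ≠ 0 ∧ ∀ k, Sop T k v = χ k • v} with hX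
  have hXfin : X.Finite := by
    by_contra hinf
    obtain ⟨s, hsub, hcard⟩ := Set.Infinite.exists_subset_card_eq hinf (m + 1)
    set v : (H → ℂ) → EuclideanSpace ℂ (Fin m) :=
      fun χ => if h : χ ∈ X then h.choose else 0 with hv
    have hv0 : ∀ χ ∈ s, v χ ≠ 0 := by
      intro χ hχ
      have hx : χ ∈ X := hsub hχ
      rw [hv]; simp only [dif_pos hx]
      exact hx.choose_spec.1
    have hve : ∀ χ ∈ s, ∀ k, Sop T k (v χ) = χ k • v χ := by
      intro χ hχ k
      have hx : χ ∈ X := hsub hχ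
      rw [hv]; simp only [dif_pos hx]
      exact hx.choose_spec.2 k
    have hli : LinearIndependent ℂ (fun χ : ↥s => v χ.1) := by
      rw [Fintype.linearIndependent_iff]
      intro g hg
      set a : (H → ℂ) → ℂ := fun χ => if h : χ ∈ s then g ⟨χ, h⟩ else 0 with ha
      have hsum : ∑ χ ∈ s, a χ • v χ = 0 := by
        rw [← Finset.sum_coe_sort s (fun χ => a χ • v χ)]
        rw [← hg]
        apply Finset.sum_congr rfl
        intro i _
        rw [ha]
        simp only [dif_pos i.2]
      have hall := eig_indep T s v hv0 hve a hsum
      intro i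
      have h2 := hall i.1 i.2
      rw [ha] at h2
      simpa [dif_pos i.2] using h2
    have hcardle := hli.fintype_card_le_finrank
    rw [finrank_euclideanSpace_fin] at hcardle
    rw [Fintype.card_coe, hcard] at hcardle
    omega
  haveI := hXfin.to_subtype
  have hshift : ∀ h : H, ∀ χ ∈ X, (fun k => χ (h⁻¹ * k)) ∈ X := by
    intro h χ hχ
    obtain ⟨vv, hvv0, hvve⟩ := hχ
    refine ⟨opOf (P h).1 vv, ?_, ?_⟩
    · intro hz
      apply hvv0
      have hinvP : opOf ((P h)⁻¹).1 (opOf (P h).1 vv) = vv := by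
        rw [← opOf_mul]
        have h2 : ((P h)⁻¹).1 * (P h).1 = (1 : Matrix (Fin m) (Fin m) ℂ) := by
          have h3 : ((P h)⁻¹ * P h : Matrix.unitaryGroup (Fin m) ℂ) = 1 := inv_mul_cancel _
          calc ((P h)⁻¹).1 * (P h).1 = ((P h)⁻¹ * P h : Matrix.unitaryGroup (Fin m) ℂ).1 := rfl
          _ = (1 : Matrix (Fin m) (Fin m) ℂ) := by rw [h3]; rfl
        rw [h2]
        exact opOf_one vv
      rw [← hinvP, hz, map_zero]
    · intro k
      have h1 : (T k).1 * (P h).1 = (P h).1 * (T (h⁻¹ * k)).1 := congrArg Subtype.val (hTP h k)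
      show opOf (T k).1 (opOf (P h).1 vv) = χ (h⁻¹ * k) • opOf (P h).1 vv
      rw [← opOf_mul, h1, opOf_mul, hvve (h⁻¹ * k), map_smul]
  set sh : H → Equiv.Perm (H → ℂ) := fun h =>
    { toFun := fun χ k => χ (h⁻¹ * k)
      invFun := fun χ k => χ (h * k)
      left_inv := fun χ => funext fun k => by simp [inv_mul_cancel_left]
      right_inv := fun χ => funext fun k => by simp [mul_inv_cancel_left] } with hsh
  have hsh_mul : ∀ h1 h2 : H, sh (h1 * h2) = sh h1 * sh h2 := by
    intro h1 h2
    apply Equiv.ext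
    intro χ
    funext k
    show χ ((h1 * h2)⁻¹ * k) = χ (h2⁻¹ * (h1⁻¹ * k))
    rw [mul_inv_rev, mul_assoc]
  have hiff : ∀ h : H, ∀ χ : H → ℂ, χ ∈ X ↔ sh h χ ∈ X := by
    intro h χ
    constructor
    · intro hχ
      exact hshift h χ hχ
    · intro hχ
      have h1 := hshift h⁻¹ _ hχ
      have he : (fun k => (sh h χ) (h⁻¹⁻¹ * k)) = χ := by
        funext k
        show χ (h⁻¹ * (h⁻¹⁻¹ * k)) = χ k
        rw [← mul_assoc, mul_inv_cancel, one_mul]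
      rwa [he] at h1
  set α : H →* Equiv.Perm ↥X := MonoidHom.mk' (fun h => Equiv.Perm.subtypePerm (sh h) (fun χ => (hiff h χ).symm))
      (by
        intro h1 h2
        apply Equiv.ext
        intro χ
        apply Subtype.ext
        show (sh (h1 * h2)) χ.1 = (sh h1) ((sh h2) χ.1)
        rw [hsh_mul]
        rfl) with hα
  have hα0 : α h0 ≠ 1 := by
    intro h1
    apply hTne
    apply Subtype.ext
    apply opOf_inj
    apply LinearMap.ext_on (span_JEv T hcomm)
    intro vv hvv
    obtain ⟨hvv0, hvve⟩ := hvv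
    choose χ hχ using hvve
    have hχX : χ ∈ X := ⟨vv, hvv0, hχ⟩
    have h2 : sh h0 χ = χ := by
      have h3 := congrArg (fun σ => ((σ : Equiv.Perm ↥X) ⟨χ, hχX⟩ : ↥X).1) h1
      exact h3
    have h3 : χ 1 = χ h0 := by
      have h4 : χ (h0⁻¹ * h0) = χ h0 := congrFun h2 h0
      rwa [inv_mul_cancel] at h4
    show Sop T h0 vv = Sop T 1 vv
    rw [hχ h0, hχ 1, h3]
  haveI : Fintype ↥X := hXfin.fintype
  set e : ↥X ≃ Fin (Fintype.card ↥X) := Fintype.equivFin ↥X with he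
  set β : H →* Equiv.Perm (Fin (Fintype.card ↥X)) := MonoidHom.mk'
      (fun h => (e.symm.trans ((α h).trans e)))
      (by
        intro h1 h2
        apply Equiv.ext
        intro x
        simp [Equiv.trans_apply, map_mul, Equiv.Perm.mul_apply]) with hβ
  have hβ0 : β h0 ≠ 1 := by
    intro h1
    apply hα0
    apply Equiv.ext
    intro χ
    have h2 := congrArg (fun σ : Equiv.Perm (Fin (Fintype.card ↥X)) => e.symm (σ (e χ))) h1
    have h3 : e.symm ((β h0) (e χ)) = χ := by simpa using h2
    have h4 : (β h0) (e χ) = e ((α h0) (e.symm (e χ))) := rfl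
    rw [h4, Equiv.symm_apply_apply, Equiv.symm_apply_apply] at h3
    show (α h0) χ = (1 : Equiv.Perm ↥X) χ
    simpa using h3
  refine ⟨↥β.range, inferInstance, inferInstance, β.rangeRestrict,
    MonoidHom.rangeRestrict_surjective β, ?_⟩
  intro hc
  exact hβ0 (congrArg Subtype.val hc)

end
end WPaux

namespace WPaux

noncomputable section
open scoped Classical
open Filter

variable {Λ : Type u} {H : Type v} [Group Λ] [Group H]

open scoped commutatorElement in
theorem comm_of_inf [Infinite H] (hMAP : IsMAPGroup (Wreath Λ H)) :
    ∀ a b : Λ, a * b = b * a := by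
  intro a b
  by_contra hne
  have hu : (⁅a, b⁆ : Λ) ≠ 1 := by
    rw [Ne, commutatorElement_eq_one_iff_commute]
    exact fun hc => hne hc
  obtain ⟨m, hm, π, hπ⟩ := hMAP (iota ⁅a, b⁆) (iota_ne_one hu)
  apply hπ
  rw [map_commutatorElement iota, map_commutatorElement π]
  rw [commutatorElement_eq_one_iff_commute]
  -- set up matrix level data
  letI : NormedAddCommGroup (Matrix (Fin m) (Fin m) ℂ) := Matrix.normedAddCommGroup
  letI : NormedSpace ℂ (Matrix (Fin m) (Fin m) ℂ) := Matrix.normedSpace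
  haveI : ProperSpace (Matrix (Fin m) (Fin m) ℂ) := FiniteDimensional.proper ℂ _
  haveI : @ContinuousMul (Matrix (Fin m) (Fin m) ℂ)
      (Matrix.normedAddCommGroup (m := Fin m) (n := Fin m) (α := ℂ)).toPseudoMetricSpace.toUniformSpace.toTopologicalSpace _ :=
    Matrix.topologicalRing.toContinuousMul
  set f : ℕ ↪ H := Infinite.natEmbedding H with hf
  set A : Matrix (Fin m) (Fin m) ℂ := (π (iota a)).1 with hA
  set B : Matrix (Fin m) (Fin m) ℂ := (π (iota b)).1 with hB
  set P : ℕ → Matrix (Fin m) (Fin m) ℂ := fun n => (π (wInr (f n))).1 with hPdef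
  have hPunit : ∀ n, P n ∈ Matrix.unitaryGroup (Fin m) ℂ := fun n => (π (wInr (f n))).2
  have hPball : ∀ n, P n ∈ Metric.closedBall (0 : Matrix (Fin m) (Fin m) ℂ) 1 := by
    intro n
    rw [Metric.mem_closedBall, dist_zero_right]
    exact entrywise_sup_norm_bound_of_unitary (hPunit n)
  obtain ⟨Q, hQmem, φ, hφmono, hconv⟩ :=
    (isCompact_closedBall (0 : Matrix (Fin m) (Fin m) ℂ) 1).tendsto_subseq hPball
  set x : ℕ → Matrix (Fin m) (Fin m) ℂ := fun n => P n * A * star (P n) with hx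
  set y : ℕ → Matrix (Fin m) (Fin m) ℂ := fun n => P n * B * star (P n) with hy
  -- identification with group elements
  have hxg : ∀ n, x n = (π (wInl (delta (f n) a))).1 := by
    intro n
    rw [← winr_iota_conj (f n) a, map_mul, map_mul, map_inv]
    rfl
  have hyg : ∀ n, y n = (π (wInl (delta (f n) b))).1 := by
    intro n
    rw [← winr_iota_conj (f n) b, map_mul, map_mul, map_inv]
    rfl
  -- commutation for distinct indices
  have hxy : ∀ n n', n ≠ n' → x n * y n' = y n' * x n := by
    intro n n' hnn
    rw [hxg, hyg]
    have hc : (delta (f n) a) * (delta (f n') b) = (delta (f n') b) * (delta (f n) a) :=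
      delta_mul_comm (fun hfe => hnn (f.injective hfe)) a b
    have hgc : π (wInl (delta (f n) a)) * π (wInl (delta (f n') b))
        = π (wInl (delta (f n') b)) * π (wInl (delta (f n) a)) := by
      rw [← map_mul, ← map_mul wInl, hc, map_mul wInl, map_mul]
    exact congrArg Subtype.val hgc
  -- limits
  have hQ1 : star Q * Q = 1 := by
    have h1 : Tendsto (fun k => star (P (φ k)) * P (φ k)) atTop (nhds (star Q * Q)) :=
      hconv.star.mul hconv
    have h2 : (fun k => star (P (φ k)) * P (φ k)) = fun _ => (1 : Matrix (Fin m) (Fin m) ℂ) := by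
      funext k
      exact (hPunit (φ k)).1
    rw [h2] at h1
    exact tendsto_nhds_unique h1 tendsto_const_nhds
  have hxlim : Tendsto (fun k => x (φ k)) atTop (nhds (Q * A * star Q)) :=
    (hconv.mul tendsto_const_nhds).mul hconv.star
  have hconv' : Tendsto (fun k => P (φ (k + 1))) atTop (nhds Q) :=
    hconv.comp (Filter.tendsto_add_atTop_nat 1)
  have hylim : Tendsto (fun k => y (φ (k + 1))) atTop (nhds (Q * B * star Q)) :=
    (hconv'.mul tendsto_const_nhds).mul hconv'.star
  have ht1 : Tendsto (fun k => x (φ k) * y (φ (k + 1))) atTop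
      (nhds ((Q * A * star Q) * (Q * B * star Q))) := hxlim.mul hylim
  have ht2 : Tendsto (fun k => x (φ k) * y (φ (k + 1))) atTop
      (nhds ((Q * B * star Q) * (Q * A * star Q))) := by
    apply (hylim.mul hxlim).congr
    intro k
    exact (hxy (φ k) (φ (k + 1)) (ne_of_lt (hφmono (Nat.lt_succ_self k)))).symm
  have heq : (Q * A * star Q) * (Q * B * star Q) = (Q * B * star Q) * (Q * A * star Q) :=
    tendsto_nhds_unique ht1 ht2
  have key : ∀ M N : Matrix (Fin m) (Fin m) ℂ,
      (Q * M * star Q) * (Q * N * star Q) = Q * (M * N) * star Q := by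
    intro M N
    calc (Q * M * star Q) * (Q * N * star Q)
        = Q * M * ((star Q * Q) * (N * star Q)) := by simp only [mul_assoc]
      _ = Q * (M * N) * star Q := by rw [hQ1, one_mul]; simp only [mul_assoc]
  have e1 : Q * (A * B) * star Q = Q * (B * A) * star Q := by
    rw [← key A B, ← key B A, heq]
  have red : ∀ M : Matrix (Fin m) (Fin m) ℂ, star Q * (Q * M * star Q) * Q = M := by
    intro M
    calc star Q * (Q * M * star Q) * Q = (star Q * Q) * M * (star Q * Q) := by
          simp only [mul_assoc]
      _ = M := by rw [hQ1, one_mul, mul_one]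
  have hAB : A * B = B * A := by
    have h1 := congrArg (fun M => star Q * M * Q) e1
    rw [red, red] at h1
    exact h1
  show π (iota a) * π (iota b) = π (iota b) * π (iota a)
  apply Subtype.ext
  exact hAB

end
end WPaux

namespace WPaux

noncomputable section
open scoped Classical
open Matrix

section matrixcons

variable {κ : Type*} [Fintype κ] [DecidableEq κ]

/-- permutation matrix -/
def permMat (e : Equiv.Perm κ) : Matrix κ κ ℂ :=
  Matrix.of fun a b => if e b = a then 1 else 0

lemma permMat_mul_apply (e : Equiv.Perm κ) (K : Matrix κ κ ℂ) (a c : κ) :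
    (permMat e * K) a c = K (e⁻¹ a) c := by
  rw [Matrix.mul_apply]
  rw [Finset.sum_eq_single (e⁻¹ a)]
  · simp [permMat]
  · intro b _ hb
    have : ¬ (e b = a) := by
      intro hc
      exact hb (by rw [← hc, Equiv.Perm.inv_def, Equiv.symm_apply_apply])
    simp [permMat, this]
  · intro h; exact absurd (Finset.mem_univ _) h

lemma mul_permMat_apply (e : Equiv.Perm κ) (K : Matrix κ κ ℂ) (a c : κ) :
    (K * permMat e) a c = K a (e c) := by
  rw [Matrix.mul_apply]
  rw [Finset.sum_eq_single (e c)]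
  · simp [permMat]
  · intro b _ hb
    simp [permMat, Ne.symm hb]
  · intro h; exact absurd (Finset.mem_univ _) h

lemma permMat_mul (e e' : Equiv.Perm κ) : permMat e * permMat e' = permMat (e * e') := by
  ext a c
  rw [permMat_mul_apply]
  simp only [permMat, Matrix.of_apply, Equiv.Perm.mul_apply]
  congr 1
  apply propext
  constructor
  · intro h
    rw [h, Equiv.Perm.inv_def, Equiv.apply_symm_apply]
  · intro h
    rw [← h, Equiv.Perm.inv_def, Equiv.symm_apply_apply]

lemma permMat_one : permMat (1 : Equiv.Perm κ) = 1 := by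
  ext a b
  simp [permMat, Matrix.one_apply, eq_comm]

lemma permMat_star (e : Equiv.Perm κ) : star (permMat e) = permMat e⁻¹ := by
  ext a b
  rw [Matrix.star_eq_conjTranspose, Matrix.conjTranspose_apply]
  simp only [permMat, Matrix.of_apply]
  have hiff : e a = b ↔ e⁻¹ b = a := by
    constructor
    · intro h; rw [← h, Equiv.Perm.inv_def, Equiv.symm_apply_apply]
    · intro h; rw [← h, Equiv.Perm.inv_def, Equiv.apply_symm_apply]
  by_cases h : e a = b
  · rw [if_pos h, if_pos (hiff.mp h)]; simp
  · rw [if_neg h, if_neg (fun hc => h (hiff.mpr hc))]; simp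

lemma permMat_mem (e : Equiv.Perm κ) : permMat e ∈ Matrix.unitaryGroup κ ℂ := by
  rw [Matrix.mem_unitaryGroup_iff]
  rw [permMat_star, permMat_mul, mul_inv_cancel, permMat_one]

/-- permutation matrices as a homomorphism into the unitary group -/
def permUHom : Equiv.Perm κ →* Matrix.unitaryGroup κ ℂ :=
  MonoidHom.mk' (fun e => ⟨permMat e, permMat_mem e⟩)
    (fun e e' => Subtype.ext (permMat_mul e e').symm)

/-- reindexing of unitary groups -/
def uReindex {κ' : Type*} [Fintype κ'] [DecidableEq κ'] (eq : κ ≃ κ') :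
    Matrix.unitaryGroup κ ℂ →* Matrix.unitaryGroup κ' ℂ :=
  MonoidHom.mk' (fun A => ⟨(A.1).submatrix eq.symm eq.symm, by
      constructor
      · show star (A.1.submatrix eq.symm eq.symm) * A.1.submatrix eq.symm eq.symm = 1
        rw [Matrix.star_eq_conjTranspose, Matrix.conjTranspose_submatrix]
        rw [show (A.1ᴴ).submatrix ⇑eq.symm ⇑eq.symm * A.1.submatrix ⇑eq.symm ⇑eq.symm
            = (A.1ᴴ * A.1).submatrix ⇑eq.symm ⇑eq.symm from
          Matrix.submatrix_mul_equiv A.1ᴴ A.1 _ eq.symm _]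
        rw [show A.1ᴴ * A.1 = 1 from A.2.1]
        exact Matrix.submatrix_one_equiv eq.symm
      · show A.1.submatrix eq.symm eq.symm * star (A.1.submatrix eq.symm eq.symm) = 1
        rw [Matrix.star_eq_conjTranspose, Matrix.conjTranspose_submatrix]
        rw [show A.1.submatrix ⇑eq.symm ⇑eq.symm * (A.1ᴴ).submatrix ⇑eq.symm ⇑eq.symm
            = (A.1 * A.1ᴴ).submatrix ⇑eq.symm ⇑eq.symm from
          Matrix.submatrix_mul_equiv A.1 A.1ᴴ _ eq.symm _]
        rw [show A.1 * A.1ᴴ = 1 from A.2.2]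
        exact Matrix.submatrix_one_equiv eq.symm⟩)
    (fun A B => Subtype.ext (by
      show ((A * B).1).submatrix ⇑eq.symm ⇑eq.symm
          = A.1.submatrix ⇑eq.symm ⇑eq.symm * B.1.submatrix ⇑eq.symm ⇑eq.symm
      rw [Matrix.submatrix_mul_equiv A.1 B.1 _ eq.symm _]
      rfl))

lemma uReindex_ne_one {κ' : Type*} [Fintype κ'] [DecidableEq κ'] (eq : κ ≃ κ')
    (A : Matrix.unitaryGroup κ ℂ) (hA : A ≠ 1) : uReindex eq A ≠ 1 := by
  intro hc
  apply hA
  apply Subtype.ext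
  have h1 := congrArg Subtype.val hc
  have h2 : (A.1).submatrix ⇑eq.symm ⇑eq.symm = (1 : Matrix κ' κ' ℂ) := h1
  ext i j
  have h3 := congrFun (congrFun h2 (eq i)) (eq j)
  simp only [Matrix.submatrix_apply, Equiv.symm_apply_apply] at h3
  rw [h3]
  simp [Matrix.one_apply, EmbeddingLike.apply_eq_iff_eq]

end matrixcons

section blockcons

variable {N : Type*} [Group N] {n : ℕ} {F : Type*} [Fintype F] [DecidableEq F]

/-- block diagonal representation built from a family of representations -/
def bdHom (φ : F → (N →* Matrix.unitaryGroup (Fin n) ℂ)) :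
    N →* Matrix.unitaryGroup (Fin n × F) ℂ :=
  MonoidHom.mk' (fun g => ⟨Matrix.blockDiagonal (fun x => (φ x g).1), by
      constructor
      · show star (Matrix.blockDiagonal fun x => (φ x g).1) *
            Matrix.blockDiagonal (fun x => (φ x g).1) = 1
        rw [Matrix.star_eq_conjTranspose, Matrix.blockDiagonal_conjTranspose,
          ← Matrix.blockDiagonal_mul]
        have : (fun k => ((φ k g).1)ᴴ * (φ k g).1) = fun _ => (1 : Matrix (Fin n) (Fin n) ℂ) := by
          funext k
          exact (φ k g).2.1
        rw [this]; exact Matrix.blockDiagonal_one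
      · show Matrix.blockDiagonal (fun x => (φ x g).1) *
            star (Matrix.blockDiagonal fun x => (φ x g).1) = 1
        rw [Matrix.star_eq_conjTranspose, Matrix.blockDiagonal_conjTranspose,
          ← Matrix.blockDiagonal_mul]
        have : (fun k => (φ k g).1 * ((φ k g).1)ᴴ) = fun _ => (1 : Matrix (Fin n) (Fin n) ℂ) := by
          funext k
          exact (φ k g).2.2
        rw [this]; exact Matrix.blockDiagonal_one⟩)
    (fun g g' => Subtype.ext (by
      show Matrix.blockDiagonal (fun x => (φ x (g * g')).1)
          = Matrix.blockDiagonal (fun x => (φ x g).1) * Matrix.blockDiagonal (fun x => (φ x g').1)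
      rw [← Matrix.blockDiagonal_mul]
      have hfe : (fun x => ((φ x) (g * g')).1) = fun k => ((φ k) g).1 * ((φ k) g').1 := by
        funext k
        rw [_root_.map_mul]
        rfl
      rw [hfe]))

lemma bdHom_ne_one (φ : F → (N →* Matrix.unitaryGroup (Fin n) ℂ)) (g : N) (x0 : F)
    (hx : φ x0 g ≠ 1) : bdHom φ g ≠ 1 := by
  intro hc
  apply hx
  apply Subtype.ext
  have h1 : Matrix.blockDiagonal (fun x => (φ x g).1) = (1 : Matrix (Fin n × F) (Fin n × F) ℂ) :=
    congrArg Subtype.val hc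
  ext i j
  have h2 := congrFun (congrFun h1 (i, x0)) (j, x0)
  rw [Matrix.blockDiagonal_apply_eq] at h2
  rw [h2]
  simp [Matrix.one_apply, Prod.ext_iff]

/-- conjugating a block diagonal matrix by a block permutation -/
lemma permMat_bd (τ : Equiv.Perm F) (M : F → Matrix (Fin n) (Fin n) ℂ) :
    permMat ((Equiv.refl (Fin n)).prodCongr τ) * Matrix.blockDiagonal M
      = Matrix.blockDiagonal (fun x => M (τ⁻¹ x)) * permMat ((Equiv.refl (Fin n)).prodCongr τ) := by
  ext a c
  rw [permMat_mul_apply, mul_permMat_apply]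
  rcases a with ⟨i, x⟩
  rcases c with ⟨j, y⟩
  have hinv : ((Equiv.refl (Fin n)).prodCongr τ)⁻¹ (i, x) = (i, τ⁻¹ x) := rfl
  have happ : ((Equiv.refl (Fin n)).prodCongr τ) (j, y) = (j, τ y) := rfl
  rw [hinv, happ]
  rw [Matrix.blockDiagonal_apply', Matrix.blockDiagonal_apply']
  by_cases h : τ⁻¹ x = y
  · rw [if_pos h, if_pos (show x = τ y by rw [← h, Equiv.Perm.inv_def, Equiv.apply_symm_apply]), h]
  · rw [if_neg h, if_neg (fun hc : x = τ y => h (by rw [hc, Equiv.Perm.inv_def, Equiv.symm_apply_apply]))]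

end blockcons

end
end WPaux

namespace WPaux

noncomputable section
open scoped Classical
open Matrix

variable {Λ : Type u} {H : Type v} [Group Λ] [Group H]
variable {F : Type w} [Fintype F] [DecidableEq F] [Group F]
variable {n : ℕ}

/-- block permutation action of `H` through `q` -/
def permOf (q : H →* F) : H →* Equiv.Perm (Fin n × F) :=
  MonoidHom.mk' (fun h => (Equiv.refl (Fin n)).prodCongr (Equiv.mulLeft (q h)))
    (by
      intro h1 h2
      apply Equiv.ext
      rintro ⟨i, x⟩
      show (i, q (h1 * h2) * x) = (i, q h1 * (q h2 * x))
      rw [_root_.map_mul, mul_assoc])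

/-- representation of H by block permutation matrices -/
def sigmaH (q : H →* F) : H →* Matrix.unitaryGroup (Fin n × F) ℂ :=
  permUHom.comp (permOf (n := n) q)

lemma mulLeft_inv_apply (a x : F) : ((Equiv.mulLeft a)⁻¹ : Equiv.Perm F) x = a⁻¹ * x := by
  rw [Equiv.Perm.inv_def, Equiv.mulLeft_symm]
  rfl

/-- the representation of the wreath product -/
def wrep (q : H →* F) (φ : F → (restrictedProduct H Λ →* Matrix.unitaryGroup (Fin n) ℂ))
    (hequiv : ∀ (h : H) (x : F) (g : restrictedProduct H Λ),
      φ x ((shiftAut Λ H h) g) = φ ((q h)⁻¹ * x) g) :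
    Wreath Λ H →* Matrix.unitaryGroup (Fin n × F) ℂ :=
  SemidirectProduct.lift (bdHom φ) (sigmaH q) (by
    intro h
    refine MonoidHom.ext fun g => ?_
    apply Subtype.ext
    show Matrix.blockDiagonal (fun x => (φ x ((shiftAut Λ H h) g)).1)
        = permMat ((Equiv.refl (Fin n)).prodCongr (Equiv.mulLeft (q h)))
          * Matrix.blockDiagonal (fun x => (φ x g).1)
          * star (permMat ((Equiv.refl (Fin n)).prodCongr (Equiv.mulLeft (q h))))
    have hfe : (fun x => (φ x ((shiftAut Λ H h) g)).1) = fun x => (φ ((q h)⁻¹ * x) g).1 := by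
      funext x
      rw [hequiv]
    rw [hfe]
    have hconj := permMat_bd (Equiv.mulLeft (q h)) (fun x => (φ x g).1)
    have hPP : permMat ((Equiv.refl (Fin n)).prodCongr (Equiv.mulLeft (q h)))
        * star (permMat ((Equiv.refl (Fin n)).prodCongr (Equiv.mulLeft (q h)))) = 1 := by
      rw [permMat_star, permMat_mul, mul_inv_cancel, permMat_one]
    rw [hconj, mul_assoc, hPP, mul_one]
    congr 1)

lemma wrep_inl (q : H →* F) (φ : F → (restrictedProduct H Λ →* Matrix.unitaryGroup (Fin n) ℂ))
    (hequiv : ∀ (h : H) (x : F) (g : restrictedProduct H Λ),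
      φ x ((shiftAut Λ H h) g) = φ ((q h)⁻¹ * x) g) (g : restrictedProduct H Λ) :
    wrep q φ hequiv (wInl g) = bdHom φ g :=
  SemidirectProduct.lift_inl _ _ _ g

lemma wrep_inr (q : H →* F) (φ : F → (restrictedProduct H Λ →* Matrix.unitaryGroup (Fin n) ℂ))
    (hequiv : ∀ (h : H) (x : F) (g : restrictedProduct H Λ),
      φ x ((shiftAut Λ H h) g) = φ ((q h)⁻¹ * x) g) (h : H) :
    wrep q φ hequiv (wInr h) = sigmaH q h :=
  SemidirectProduct.lift_inr _ _ _ h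

lemma wrep_elem (q : H →* F) (φ : F → (restrictedProduct H Λ →* Matrix.unitaryGroup (Fin n) ℂ))
    (hequiv : ∀ (h : H) (x : F) (g : restrictedProduct H Λ),
      φ x ((shiftAut Λ H h) g) = φ ((q h)⁻¹ * x) g) (w : Wreath Λ H) :
    wrep q φ hequiv w = bdHom φ w.left * sigmaH q w.right := by
  have h1 : (wInl w.left : Wreath Λ H) * wInr w.right = w :=
    SemidirectProduct.inl_left_mul_inr_right w
  conv_lhs => rw [← h1]
  rw [_root_.map_mul, wrep_inl, wrep_inr]

lemma exists_map_rep (hn : 1 ≤ n) (q : H →* F)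
    (φ : F → (restrictedProduct H Λ →* Matrix.unitaryGroup (Fin n) ℂ))
    (hequiv : ∀ (h : H) (x : F) (g : restrictedProduct H Λ),
      φ x ((shiftAut Λ H h) g) = φ ((q h)⁻¹ * x) g)
    (w : Wreath Λ H) (hw : wrep q φ hequiv w ≠ 1) :
    ∃ (N : ℕ), 1 ≤ N ∧ ∃ π : Wreath Λ H →* Matrix.unitaryGroup (Fin N) ℂ, π w ≠ 1 := by
  haveI : Nonempty (Fin n) := ⟨⟨0, hn⟩⟩
  haveI : Nonempty F := ⟨1⟩
  refine ⟨Fintype.card (Fin n × F), Fintype.card_pos, ?_⟩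
  refine ⟨(uReindex (Fintype.equivFin (Fin n × F))).comp (wrep q φ hequiv), ?_⟩
  exact uReindex_ne_one _ _ hw

end
end WPaux

namespace WPaux

noncomputable section
open scoped Classical
open Matrix

lemma permMat_ne_one {κ : Type*} [Fintype κ] [DecidableEq κ] (e : Equiv.Perm κ) (a : κ)
    (ha : e a ≠ a) : permUHom e ≠ 1 := by
  intro hc
  have h1 : permMat e = 1 := congrArg Subtype.val hc
  have h2 := congrFun (congrFun h1 (e a)) a
  rw [Matrix.one_apply_ne ha] at h2
  have h3 : permMat e (e a) a = 1 := by simp [permMat]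
  rw [h3] at h2
  exact one_ne_zero h2

variable {Λ : Type u} [Group Λ]

lemma exists_char (hab : ∀ a b : Λ, a * b = b * a) {n : ℕ}
    (π0 : Λ →* Matrix.unitaryGroup (Fin n) ℂ) (z : Λ) (hz : π0 z ≠ 1) :
    ∃ χ : Λ →* ℂ, (∀ a : Λ, star (χ a) * χ a = 1) ∧ χ z ≠ 1 := by
  set T : Λ → Matrix.unitaryGroup (Fin n) ℂ := fun a => π0 a with hT
  have hcomm : ∀ i j : Λ, (T i).1 * (T j).1 = (T j).1 * (T i).1 := by
    intro i j
    have h1 : π0 i * π0 j = π0 j * π0 i := by rw [← _root_.map_mul, ← _root_.map_mul, hab]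
    exact congrArg Subtype.val h1
  have hexists : ∃ v : EuclideanSpace ℂ (Fin n), v ≠ 0 ∧
      (∃ ψ : Λ → ℂ, (∀ a, Sop T a v = ψ a • v) ∧ ψ z ≠ 1) := by
    by_contra hno
    push_neg at hno
    apply hz
    apply Subtype.ext
    apply opOf_inj
    apply LinearMap.ext_on (span_JEv T hcomm)
    intro v hv
    obtain ⟨hv0, hve⟩ := hv
    choose ψ hψ using hve
    have hz1 : ψ z = 1 := hno v hv0 ψ hψ
    show Sop T z v = opOf (1 : Matrix (Fin n) (Fin n) ℂ) v
    rw [hψ z, hz1, one_smul, opOf_one]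
  obtain ⟨v, hv0, ψ, hψ, hψz⟩ := hexists
  have huniq : ∀ (c c' : ℂ), c • v = c' • v → c = c' := by
    intro c c' hcc
    have h1 : (c - c') • v = 0 := by rw [sub_smul, hcc, sub_self]
    rcases smul_eq_zero.mp h1 with h2 | h2
    · exact sub_eq_zero.mp h2
    · exact absurd h2 hv0
  have hvv : (inner ℂ v v : ℂ) ≠ 0 := fun h => hv0 (inner_self_eq_zero.mp h)
  have hunit : ∀ a : Λ, star (ψ a) * ψ a = 1 := by
    intro a
    have h1 := LinearMap.adjoint_inner_left (Matrix.toEuclideanLin (T a).1) v (opOf (T a).1 v)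
    rw [← Matrix.toEuclideanLin_conjTranspose_eq_adjoint] at h1
    have h2 : Matrix.toEuclideanLin ((T a).1ᴴ) (opOf (T a).1 v) = v := by
      show opOf ((T a).1ᴴ) (opOf (T a).1 v) = v
      rw [← opOf_mul, show (T a).1ᴴ * (T a).1 = 1 from (T a).2.1, opOf_one]
    rw [h2] at h1
    -- h1 : inner v v = inner (opOf (T a) v) (Sop T a v)
    have h3 : (inner ℂ (Sop T a v) (Sop T a v) : ℂ) = inner ℂ v v := h1.symm
    rw [hψ a, inner_smul_left, inner_smul_right] at h3
    have h4 : (star (ψ a) * ψ a) * (inner ℂ v v : ℂ) = (inner ℂ v v : ℂ) := by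
      rw [mul_assoc, ← starRingEnd_apply]
      exact h3
    nth_rewrite 2 [← one_mul (inner ℂ v v : ℂ)] at h4
    exact mul_right_cancel₀ hvv h4
  have hmul : ∀ a b : Λ, ψ (a * b) = ψ a * ψ b := by
    intro a b
    apply huniq
    have h1 : Sop T (a * b) v = Sop T a (Sop T b v) := by
      have h0 : (T (a * b)).1 = (T a).1 * (T b).1 := congrArg Subtype.val (_root_.map_mul π0 a b)
      rw [show Sop T (a * b) v = opOf ((T (a * b)).1) v from rfl, h0, opOf_mul]
    rw [← hψ (a * b), h1, hψ b, _root_.map_smul, hψ a, smul_smul, mul_comm (ψ b) (ψ a)]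
  have hone : ψ 1 = 1 := by
    apply huniq
    rw [← hψ 1, one_smul]
    show opOf ((π0 1).1) v = v
    rw [map_one π0]
    exact opOf_one v
  exact ⟨{ toFun := ψ, map_one' := hone, map_mul' := hmul }, hunit, hψz⟩

lemma exists_sep_hom {H : Type v} [Group H] (hRF : IsRFGroup H) (s : Finset H) :
    ∃ (F : Type v) (_ : Group F) (_ : Finite F) (q : H →* F),
      ∀ x ∈ s, ∀ y ∈ s, q x = q y → x = y := by
  set t : Finset (H × H) := (s ×ˢ s).filter (fun p => p.1 ≠ p.2) with ht
  have hch : ∀ p : ↥t, ∃ (Fp : Type) (_ : Group Fp) (_ : Finite Fp) (qp : H →* Fp),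
      qp (p.1.1 * p.1.2⁻¹) ≠ 1 := by
    intro p
    have hp := Finset.mem_filter.mp p.2
    have hne : p.1.1 * p.1.2⁻¹ ≠ 1 := by
      intro hc
      exact hp.2 (by rwa [mul_inv_eq_one] at hc)
    obtain ⟨Fp, iG, iF, qp, _, hqp⟩ := hRF _ hne
    exact ⟨Fp, iG, iF, qp, hqp⟩
  choose Ft iG iF qp hqp using hch
  letI : ∀ p, Group (Ft p) := iG
  haveI : ∀ p, Finite (Ft p) := fun p => iF p
  refine ⟨∀ p : ↥t, Ft p, inferInstance, inferInstance,
    MonoidHom.mk' (fun h p => qp p h) (fun a b => funext fun p => _root_.map_mul (qp p) a b), ?_⟩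
  intro x hx y hy hxy
  by_contra hne
  have hmem : (x, y) ∈ t :=
    Finset.mem_filter.mpr ⟨Finset.mem_product.mpr ⟨hx, hy⟩, hne⟩
  apply hqp ⟨(x, y), hmem⟩
  have h1 : qp ⟨(x, y), hmem⟩ x = qp ⟨(x, y), hmem⟩ y := congrFun hxy ⟨(x, y), hmem⟩
  show qp ⟨(x, y), hmem⟩ (x * y⁻¹) = 1
  rw [_root_.map_mul, map_inv, h1, mul_inv_cancel]

end
end WPaux

namespace WPaux

noncomputable section
open scoped Classical
open Matrix

lemma case_finite {Λ : Type u} {H : Type v} [Group Λ] [Group H] [Finite H]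
    (hΛ : IsMAPGroup Λ) (g : restrictedProduct H Λ) (hg : g ≠ 1) :
    ∃ (N : ℕ), 1 ≤ N ∧ ∃ π : Wreath Λ H →* Matrix.unitaryGroup (Fin N) ℂ,
      π (wInl g) ≠ 1 := by
  haveI : Fintype H := Fintype.ofFinite H
  have hgx : ∃ x0, (g : H → Λ) x0 ≠ 1 := by
    by_contra hc
    push_neg at hc
    exact hg (Subtype.ext (funext fun x => hc x))
  obtain ⟨x0, hx0⟩ := hgx
  obtain ⟨nn, hnn, π0, hπ0⟩ := hΛ _ hx0
  set φ : H → (restrictedProduct H Λ →* Matrix.unitaryGroup (Fin nn) ℂ) :=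
    fun x => π0.comp ((Pi.evalMonoidHom (fun _ : H => Λ) x).comp (restrictedProduct H Λ).subtype)
    with hφ
  have hequiv : ∀ (h : H) (x : H) (g' : restrictedProduct H Λ),
      φ x ((shiftAut Λ H h) g') = φ (((MonoidHom.id H) h)⁻¹ * x) g' := fun h x g' => rfl
  apply exists_map_rep hnn (MonoidHom.id H) φ hequiv
  rw [wrep_inl]
  exact bdHom_ne_one φ g x0 hπ0

lemma case_right {Λ : Type u} {H : Type v} [Group Λ] [Group H]
    (hRF : IsRFGroup H) (w : Wreath Λ H) (hw : w.right ≠ 1) :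
    ∃ (N : ℕ), 1 ≤ N ∧ ∃ π : Wreath Λ H →* Matrix.unitaryGroup (Fin N) ℂ, π w ≠ 1 := by
  obtain ⟨F, iG, iF, q, hsurj, hq⟩ := hRF w.right hw
  letI := iG
  haveI := iF
  haveI : Fintype F := Fintype.ofFinite F
  set φ : F → (restrictedProduct H Λ →* Matrix.unitaryGroup (Fin 1) ℂ) := fun _ => 1 with hφ
  have hequiv : ∀ (h : H) (x : F) (g' : restrictedProduct H Λ),
      φ x ((shiftAut Λ H h) g') = φ ((q h)⁻¹ * x) g' := fun _ _ _ => rfl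
  apply exists_map_rep (le_refl 1) q φ hequiv
  rw [wrep_elem]
  have hbd : bdHom φ w.left = 1 := by
    apply Subtype.ext
    show Matrix.blockDiagonal (fun x : F => ((φ x) w.left).1) = 1
    have h1 : (fun x : F => ((φ x) w.left).1) = fun _ => (1 : Matrix (Fin 1) (Fin 1) ℂ) := rfl
    rw [h1]
    exact Matrix.blockDiagonal_one
  rw [hbd, one_mul]
  have h3 : (permOf (n := 1) q w.right) ((0 : Fin 1), (1 : F)) ≠ ((0 : Fin 1), (1 : F)) := by
    intro hc
    apply hq
    have h4 := congrArg Prod.snd hc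
    show q w.right = 1
    have h5 : q w.right * 1 = 1 := h4
    rwa [mul_one] at h5
  exact permMat_ne_one _ _ h3

lemma case_abelian {Λ : Type u} {H : Type v} [Group Λ] [Group H]
    (hab : ∀ a b : Λ, a * b = b * a) (hRF : IsRFGroup H) (hΛ : IsMAPGroup Λ)
    (g : restrictedProduct H Λ) (hg : g ≠ 1) :
    ∃ (N : ℕ), 1 ≤ N ∧ ∃ π : Wreath Λ H →* Matrix.unitaryGroup (Fin N) ℂ,
      π (wInl g) ≠ 1 := by
  have hgx : ∃ x0, (g : H → Λ) x0 ≠ 1 := by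
    by_contra hc
    push_neg at hc
    exact hg (Subtype.ext (funext fun x => hc x))
  obtain ⟨x0, hx0⟩ := hgx
  obtain ⟨nn, hnn, π0, hπ0⟩ := hΛ _ hx0
  obtain ⟨χ, hχu, hχz⟩ := exists_char hab π0 _ hπ0
  obtain ⟨F, iG, iF, q, hq⟩ := exists_sep_hom hRF g.2.toFinset
  letI := iG
  haveI := iF
  haveI : Fintype F := Fintype.ofFinite F
  letI : CommMonoid Λ := { (inferInstance : Monoid Λ) with mul_comm := hab }
  set fp : F → restrictedProduct H Λ → Λ :=
    fun x g' => ∏ᶠ y ∈ {y : H | q y = x}, (g' : H → Λ) y with hfp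
  have hfp_mul : ∀ (x : F) (g1 g2 : restrictedProduct H Λ),
      fp x (g1 * g2) = fp x g1 * fp x g2 := by
    intro x g1 g2
    rw [hfp]
    simp only
    have h1 : ∏ᶠ y ∈ {y : H | q y = x}, ((g1 * g2 : restrictedProduct H Λ) : H → Λ) y
        = ∏ᶠ y ∈ {y : H | q y = x}, ((g1 : H → Λ) y * (g2 : H → Λ) y) := rfl
    rw [h1]
    exact finprod_mem_mul_distrib' (Set.Finite.subset g1.2 Set.inter_subset_right)
      (Set.Finite.subset g2.2 Set.inter_subset_right)
  have hfp_shift : ∀ (h : H) (x : F) (g' : restrictedProduct H Λ),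
      fp x ((shiftAut Λ H h) g') = fp ((q h)⁻¹ * x) g' := by
    intro h x g'
    rw [hfp]
    simp only
    have h0 : (((shiftAut Λ H h) g' : restrictedProduct H Λ) : H → Λ)
        = fun y => (g' : H → Λ) (h⁻¹ * y) := rfl
    rw [h0]
    have himg : {y : H | q y = x} = (fun z => h * z) '' {z : H | q z = (q h)⁻¹ * x} := by
      ext y
      constructor
      · intro hy
        have hy' : q y = x := hy
        refine ⟨h⁻¹ * y, ?_, by show h * (h⁻¹ * y) = y; rw [mul_inv_cancel_left]⟩
        show q (h⁻¹ * y) = (q h)⁻¹ * x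
        rw [_root_.map_mul, map_inv, hy']
      · rintro ⟨z, hz, rfl⟩
        have hz' : q z = (q h)⁻¹ * x := hz
        show q (h * z) = x
        rw [_root_.map_mul, hz', mul_inv_cancel_left]
    rw [himg, finprod_mem_image ((mul_right_injective h).injOn)]
    apply finprod_mem_congr rfl
    intro z hz
    rw [inv_mul_cancel_left]
  have hfp_val : fp (q x0) g = (g : H → Λ) x0 := by
    rw [hfp]
    simp only
    have hsub : {y : H | q y = q x0} ∩ Function.mulSupport ((g : H → Λ)) = {x0} := by
      ext y
      constructor
      · rintro ⟨hy1, hy2⟩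
        have hy2' : y ∈ g.2.toFinset := (Set.Finite.mem_toFinset g.2).mpr hy2
        have hx0' : x0 ∈ g.2.toFinset := (Set.Finite.mem_toFinset g.2).mpr hx0
        exact hq y hy2' x0 hx0' hy1
      · intro hy
        rw [Set.mem_singleton_iff] at hy
        subst hy
        exact ⟨rfl, hx0⟩
    rw [← finprod_mem_inter_mulSupport, hsub, finprod_mem_singleton]
  have hmem1 : ∀ (c : ℂ), star c * c = 1 →
      (c • (1 : Matrix (Fin 1) (Fin 1) ℂ)) ∈ Matrix.unitaryGroup (Fin 1) ℂ := by
    intro c hc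
    constructor
    · show star (c • (1 : Matrix (Fin 1) (Fin 1) ℂ)) * (c • 1) = 1
      rw [star_smul, star_one, smul_mul_assoc, one_mul, smul_smul, hc, one_smul]
    · show (c • (1 : Matrix (Fin 1) (Fin 1) ℂ)) * star (c • 1) = 1
      rw [star_smul, star_one, smul_mul_assoc, one_mul, smul_smul, mul_comm c (star c), hc,
        one_smul]
  set φ : F → (restrictedProduct H Λ →* Matrix.unitaryGroup (Fin 1) ℂ) :=
    fun x => MonoidHom.mk' (fun g' => ⟨χ (fp x g') • 1, hmem1 _ (hχu _)⟩)
      (fun g1 g2 => Subtype.ext (by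
        show χ (fp x (g1 * g2)) • (1 : Matrix (Fin 1) (Fin 1) ℂ)
            = (χ (fp x g1) • 1) * (χ (fp x g2) • 1)
        rw [smul_mul_assoc, one_mul, smul_smul, hfp_mul, _root_.map_mul])) with hφ
  have hequiv : ∀ (h : H) (x : F) (g' : restrictedProduct H Λ),
      φ x ((shiftAut Λ H h) g') = φ ((q h)⁻¹ * x) g' := by
    intro h x g'
    apply Subtype.ext
    show χ (fp x ((shiftAut Λ H h) g')) • (1 : Matrix (Fin 1) (Fin 1) ℂ)
        = χ (fp ((q h)⁻¹ * x) g') • 1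
    rw [hfp_shift]
  apply exists_map_rep (le_refl 1) q φ hequiv
  rw [wrep_inl]
  apply bdHom_ne_one φ g (q x0)
  intro hc
  apply hχz
  have h1 : χ (fp (q x0) g) • (1 : Matrix (Fin 1) (Fin 1) ℂ) = 1 := congrArg Subtype.val hc
  have h2 := congrFun (congrFun h1 0) 0
  simp only [Matrix.smul_apply, Matrix.one_apply_eq, smul_eq_mul, mul_one] at h2
  rw [hfp_val] at h2
  exact h2

end
end WPaux



theorem wreath_map_iff (Λ : Type u) (H : Type v) [Group Λ] [Group H]
    [Countable Λ] [Countable H] [Nontrivial Λ] :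
    IsMAPGroup (Wreath Λ H) ↔
      (IsMAPGroup Λ ∧ IsRFGroup H ∧ (Finite H ∨ ∀ a b : Λ, a * b = b * a)) := by
  constructor
  · intro hMAP
    obtain ⟨lam, hlam⟩ := exists_ne (1 : Λ)
    refine ⟨WPaux.isMAP_lambda hMAP, WPaux.isRF_H hMAP lam hlam, ?_⟩
    by_cases hfin : Finite H
    · exact Or.inl hfin
    · haveI : Infinite H := not_finite_iff_infinite.mp hfin
      exact Or.inr (WPaux.comm_of_inf hMAP)
  · rintro ⟨hΛ, hRF, hfab⟩ w hw
    by_cases hr : w.right = 1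
    · have hwl : w = WPaux.wInl w.left := by
        conv_lhs => rw [← SemidirectProduct.inl_left_mul_inr_right w]
        rw [hr, map_one, mul_one]
        rfl
      have hleft : w.left ≠ 1 := by
        intro hc
        apply hw
        rw [hwl, hc, map_one]
      rcases hfab with hfin | hab
      · haveI := hfin
        rw [hwl]
        exact WPaux.case_finite hΛ w.left hleft
      · rw [hwl]
        exact WPaux.case_abelian hab hRF hΛ w.left hleft
    · exact WPaux.case_right hRF w hr
end
end
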